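/- arXiv:1701.06124 — 13 statements merged into one kernel-verified Lean document; each statement's English description precedes it below -/
import Mathlib

section
/- Let A be a commutative unital R-algebra, D₁,…,Dₙ R-derivations of A, P a homogeneous polynomial of degree d in n commuting variables with coefficients in A, and u ∈ A. Then applying the operator ad_{-u} d times to P(D₁,…,Dₙ) yields the multiplication operator by d!·P(D₁u,…,Dₙu), i.e., (ad_{-u})^d(P(D)) = d!·ℓ_{P(∇u)}. -/
open Finset in
/-- The differential operator `P(D)` obtained from `P ∈ A[ξ₁,…,ξₙ]` by substituting the
derivations `Dᵢ` for `ξᵢ`, with the coefficients written on the left. -/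
noncomputable def mvDiffOp {R A : Type*} [CommRing R] [CommRing A] [Algebra R A]
    {n : ℕ} (D : Fin n → Derivation R A A) (P : MvPolynomial (Fin n) A) :
    Module.End R A :=
  ∑ m ∈ P.support,
    LinearMap.mulLeft R (P.coeff m) *
      ((List.finRange n).map fun i => (D i).toLinearMap ^ m i).prod

section aux
variable {R A : Type*} [CommRing R] [CommRing A] [Algebra R A]

/-- the inner derivation `ad_{-u}` -/
def adu (u : A) (Φ : Module.End R A) : Module.End R A :=
  Φ * LinearMap.mulLeft R u - LinearMap.mulLeft R u * Φ

variable (u : A)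

lemma adu_mul (x y : Module.End R A) :
    adu u (x * y) = x * adu u y + adu u x * y := by
  unfold adu; simp only [mul_sub, sub_mul, mul_assoc]; abel

lemma adu_add (x y : Module.End R A) : adu u (x + y) = adu u x + adu u y := by
  unfold adu; noncomm_ring

lemma adu_zero : adu u (0 : Module.End R A) = 0 := by
  unfold adu; noncomm_ring

lemma adu_nsmul (k : ℕ) (x : Module.End R A) : adu u (k • x) = k • adu u x := by
  unfold adu
  rw [smul_sub, smul_mul_assoc, mul_smul_comm]

lemma adu_mulLeft (a : A) : adu u (LinearMap.mulLeft R a) = 0 := by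
  unfold adu
  rw [Module.End.mul_eq_comp, Module.End.mul_eq_comp, ← LinearMap.mulLeft_mul,
    ← LinearMap.mulLeft_mul, mul_comm, sub_self]

lemma adu_derivation (D : Derivation R A A) :
    adu u D.toLinearMap = LinearMap.mulLeft R (D u) := by
  ext x
  simp only [adu, LinearMap.sub_apply, Module.End.mul_apply, LinearMap.mulLeft_apply,
    Derivation.coeFn_coe, Derivation.leibniz, smul_eq_mul]
  ring

lemma adu_one : adu u (1 : Module.End R A) = 0 := by
  unfold adu; noncomm_ring

lemma adu_iter_mul (x : Module.End R A) (hx : adu u (adu u x) = 0) :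
    ∀ (k : ℕ) (y : Module.End R A), (adu u)^[k + 1] (x * y) =
      x * (adu u)^[k + 1] y + (k + 1) • (adu u x * (adu u)^[k] y) := by
  intro k
  induction k with
  | zero =>
    intro y
    simp only [zero_add, Function.iterate_one, Function.iterate_zero, id_eq, one_smul]
    exact adu_mul u x y
  | succ k ih =>
    intro y
    rw [Function.iterate_succ_apply' (adu u) (k + 1) (x * y), ih, adu_add, adu_mul,
      adu_nsmul, adu_mul, hx, zero_mul, add_zero,
      ← Function.iterate_succ_apply' (adu u) (k + 1) y,
      ← Function.iterate_succ_apply' (adu u) k y]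
    rw [succ_nsmul ((adu u) x * (adu u)^[k + 1] y) (k + 1)]
    abel

lemma adu_iter_mulLeft_left (x : Module.End R A) (hx : adu u x = 0) :
    ∀ (k : ℕ) (y : Module.End R A), (adu u)^[k] (x * y) = x * (adu u)^[k] y := by
  intro k
  induction k with
  | zero => simp
  | succ k ih =>
    intro y
    rw [Function.iterate_succ_apply' (adu u) k (x * y), ih, adu_mul, hx, zero_mul, add_zero,
      ← Function.iterate_succ_apply' (adu u) k y]

lemma adu_iter_vanish :
    ∀ (L : List (Module.End R A)), (∀ x ∈ L, adu u (adu u x) = 0) →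
      ∀ k, L.length < k → (adu u)^[k] L.prod = 0 := by
  intro L
  induction L with
  | nil =>
    intro _ k hk
    obtain ⟨j, rfl⟩ : ∃ j, k = j + 1 := ⟨k - 1, (Nat.succ_pred_eq_of_pos hk).symm⟩
    rw [List.prod_nil, Function.iterate_succ_apply, adu_one,
      Function.iterate_fixed (adu_zero u)]
  | cons x L ih =>
    intro hL k hk
    simp only [List.length_cons] at hk
    obtain ⟨j, rfl⟩ : ∃ j, k = j + 1 := ⟨k - 1, by omega⟩
    rw [List.prod_cons, adu_iter_mul u x (hL x List.mem_cons_self) j,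
      ih (fun y hy => hL y (List.mem_cons_of_mem x hy)) (j + 1) (by omega),
      ih (fun y hy => hL y (List.mem_cons_of_mem x hy)) j (by omega),
      mul_zero, zero_add, mul_zero, smul_zero]

lemma adu_iter_prod :
    ∀ (L : List (Module.End R A)), (∀ x ∈ L, adu u (adu u x) = 0) →
      (adu u)^[L.length] L.prod = (L.length).factorial • (L.map (adu u)).prod := by
  intro L
  induction L with
  | nil => simp
  | cons x L ih =>
    intro hL
    rw [List.prod_cons, List.length_cons, adu_iter_mul u x (hL x List.mem_cons_self),
      adu_iter_vanish u L (fun y hy => hL y (List.mem_cons_of_mem x hy)) (L.length + 1)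
        (Nat.lt_succ_self _),
      mul_zero, zero_add, ih (fun y hy => hL y (List.mem_cons_of_mem x hy)),
      List.map_cons, List.prod_cons, mul_smul_comm, smul_smul, Nat.factorial_succ]

lemma adu_iter_sum {ι : Type*} (k : ℕ) (s : Finset ι) (f : ι → Module.End R A) :
    (adu u)^[k] (∑ i ∈ s, f i) = ∑ i ∈ s, (adu u)^[k] (f i) := by
  induction k generalizing f with
  | zero => simp
  | succ k ih =>
    have h : adu u (∑ i ∈ s, f i) = ∑ i ∈ s, adu u (f i) :=
      map_sum (AddMonoidHom.mk' (adu u) (adu_add u)) f s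
    rw [Function.iterate_succ_apply, h, ih]
    exact Finset.sum_congr rfl fun i _ => (Function.iterate_succ_apply (adu u) k (f i)).symm

lemma flatMap_replicate_prod {ι M : Type*} [Monoid M] (g : ι → M) (e : ι → ℕ) :
    ∀ l : List ι,
      (l.flatMap fun i => List.replicate (e i) (g i)).prod = (l.map fun i => g i ^ e i).prod := by
  intro l
  induction l with
  | nil => simp
  | cons a l ih => simp [List.prod_append, List.prod_replicate, ih]

lemma flatMap_replicate_length {ι M : Type*} (g : ι → M) (e : ι → ℕ) :
    ∀ l : List ι,
      (l.flatMap fun i => List.replicate (e i) (g i)).length = (l.map e).sum := by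
  intro l
  induction l with
  | nil => simp
  | cons a l ih => simp [ih]

lemma flatMap_replicate_map {ι M N : Type*} (g : ι → M) (f : M → N) (e : ι → ℕ) :
    ∀ l : List ι,
      ((l.flatMap fun i => List.replicate (e i) (g i)).map f) =
        l.flatMap fun i => List.replicate (e i) (f (g i)) := by
  intro l
  induction l with
  | nil => simp
  | cons a l ih => simp [ih]

lemma mulLeft_listProd : ∀ l : List A,
    LinearMap.mulLeft R l.prod = (l.map (LinearMap.mulLeft R)).prod := by
  intro l
  induction l with
  | nil => simp [LinearMap.mulLeft_one, Module.End.one_eq_id]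
  | cons a l ih =>
    simp only [List.prod_cons, List.map_cons, LinearMap.mulLeft_mul, ih]
    rfl

lemma mulLeft_sum {ι : Type*} (s : Finset ι) (f : ι → A) :
    LinearMap.mulLeft R (∑ i ∈ s, f i) = ∑ i ∈ s, LinearMap.mulLeft R (f i) := by
  ext x
  simp [Finset.sum_mul, LinearMap.coe_sum, Finset.sum_apply]

end aux

/-- Let `A` be a commutative unital `R`-algebra, `D₁,…,Dₙ` `R`-derivations of `A`, `P` a
homogeneous polynomial of degree `d` in `n` commuting variables with coefficients in `A`,
and `u ∈ A`. Then `(ad_{-u})^d (P(D)) = d! · ℓ_{P(∇u)}`. -/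
theorem stmt2 {R A : Type*} [CommRing R] [CommRing A] [Algebra R A]
    (n d : ℕ) (D : Fin n → Derivation R A A)
    (P : MvPolynomial (Fin n) A) (hP : P.IsHomogeneous d) (u : A) :
    (fun Φ : Module.End R A =>
        Φ * LinearMap.mulLeft R u - LinearMap.mulLeft R u * Φ)^[d] (mvDiffOp D P) =
      (Nat.factorial d) • LinearMap.mulLeft R (MvPolynomial.eval (fun i => D i u) P) := by
  show (adu u)^[d] (mvDiffOp D P) = _
  rw [mvDiffOp, adu_iter_sum, MvPolynomial.eval_eq', mulLeft_sum, Finset.smul_sum]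
  refine Finset.sum_congr rfl fun m hm => ?_
  have hdeg : ∑ i, m i = d := by
    have h1 := hP (MvPolynomial.mem_support_iff.mp hm)
    rw [Finsupp.weight_apply, Finsupp.sum_fintype] at h1
    · simpa using h1
    · intro i; simp
  set Lm : List (Module.End R A) :=
    (List.finRange n).flatMap fun i => List.replicate (m i) (D i).toLinearMap with hLm
  have hlen : Lm.length = d := by
    rw [hLm, flatMap_replicate_length, ← Fin.sum_univ_def, hdeg]
  have hsq : ∀ x ∈ Lm, adu u (adu u x) = 0 := by
    intro x hx
    rcases List.mem_flatMap.mp hx with ⟨i, -, hrep⟩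
    rw [List.eq_of_mem_replicate hrep, adu_derivation, adu_mulLeft]
  have hQ : ((List.finRange n).map fun i => (D i).toLinearMap ^ m i).prod = Lm.prod :=
    (flatMap_replicate_prod _ _ _).symm
  have hmapprod : (Lm.map (adu u)).prod =
      LinearMap.mulLeft R (∏ i, (D i u) ^ m i) := by
    rw [hLm, flatMap_replicate_map]
    simp only [adu_derivation]
    rw [flatMap_replicate_prod]
    have : ((List.finRange n).map fun i => LinearMap.mulLeft R (D i u) ^ m i) =
        (List.finRange n).map fun i => LinearMap.mulLeft R ((D i u) ^ m i) := by
      simp [LinearMap.pow_mulLeft]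
    rw [this, Fin.prod_univ_def, mulLeft_listProd, List.map_map]
    simp only [Function.comp_def]
  rw [hQ, adu_iter_mulLeft_left u _ (adu_mulLeft u _), ← hlen,
    adu_iter_prod u Lm hsq, hlen, hmapprod, mul_smul_comm]
  congr 1
  rw [LinearMap.mulLeft_mul]
  rfl
end

section
/- Let A be an algebra over a commutative ring R, D an R-derivation of A, and λ, μ ∈ R. Then for all m ≥ 1 and a, b ∈ A: (D - (λ+μ)·id)^m(ab) = Σ_{i=0}^m C(m,i)·((D - λ·id)^i a)·((D - μ·id)^{m-i} b). -/
/-- For an `R`-algebra `A` (not necessarily commutative), an `R`-derivation `D` and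
`λ μ ∈ R`, for all `m ≥ 1` and `a b ∈ A`:
`(D - (λ+μ)·id)^m (ab) = ∑_{i=0}^m C(m,i) ((D - λ·id)^i a)((D - μ·id)^{m-i} b)`. -/
theorem stmt7 {R A : Type*} [CommRing R] [Ring A] [Algebra R A]
    (D : A →ₗ[R] A) (hD : ∀ x y : A, D (x * y) = D x * y + x * D y)
    (l m' : R) (m : ℕ) (hm : 1 ≤ m) (a b : A) :
    ((D - (l + m') • (LinearMap.id : A →ₗ[R] A)) ^ m) (a * b) =
      ∑ i ∈ Finset.range (m + 1), m.choose i •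
        (((D - l • (LinearMap.id : A →ₗ[R] A)) ^ i) a *
          ((D - m' • (LinearMap.id : A →ₗ[R] A)) ^ (m - i)) b) := by
  clear hm
  set F := D - l • (LinearMap.id : A →ₗ[R] A) with hF
  set G := D - m' • (LinearMap.id : A →ₗ[R] A) with hG
  set E := D - (l + m') • (LinearMap.id : A →ₗ[R] A) with hE
  have key : ∀ x y : A, E (x * y) = F x * y + x * G y := by
    intro x y
    simp only [hE, hF, hG, LinearMap.sub_apply, LinearMap.smul_apply, LinearMap.id_apply, LinearMap.add_apply, hD,
      add_smul, smul_mul_assoc, mul_smul_comm, sub_mul, mul_sub]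
    abel
  induction m with
  | zero => simp
  | succ n ih =>
    rw [pow_succ', Module.End.mul_apply, ih, map_sum]
    have step : ∀ i ∈ Finset.range (n + 1),
        E (n.choose i • ((F ^ i) a * (G ^ (n - i)) b)) =
          n.choose i • ((F ^ (i + 1)) a * (G ^ (n - i)) b) +
            n.choose i • ((F ^ i) a * (G ^ (n - i + 1)) b) := by
      intro i _
      rw [map_nsmul, key, smul_add, pow_succ' F, Module.End.mul_apply,
        pow_succ' G, Module.End.mul_apply]
    rw [Finset.sum_congr rfl step, Finset.sum_add_distrib]
    have hsub : ∀ i ∈ Finset.range (n + 1), n - i + 1 = n + 1 - i := by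
      intro i hi
      simp only [Finset.mem_range] at hi
      omega
    have h2 : ∑ i ∈ Finset.range (n + 1), n.choose i • ((F ^ i) a * (G ^ (n - i + 1)) b)
        = ∑ i ∈ Finset.range (n + 1), n.choose i • ((F ^ i) a * (G ^ (n + 1 - i)) b) := by
      refine Finset.sum_congr rfl fun i hi => by rw [hsub i hi]
    rw [h2]
    -- RHS manipulation
    rw [Finset.sum_range_succ' (fun i => (n + 1).choose i • ((F ^ i) a * (G ^ (n + 1 - i)) b))]
    simp only [Nat.succ_sub_succ, Nat.choose_zero_right, Nat.choose_succ_succ, add_nsmul,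
      Nat.sub_zero, one_smul]
    rw [Finset.sum_add_distrib]
    -- second sum on LHS: split off i = 0
    rw [Finset.sum_range_succ' (fun i => n.choose i • ((F ^ i) a * (G ^ (n + 1 - i)) b))]
    simp only [Nat.succ_sub_succ, Nat.choose_zero_right, Nat.sub_zero, one_smul]
    -- the (n, i+1) sum: extend range n to range (n+1) since choose n (n+1) = 0
    have h3 : ∑ i ∈ Finset.range (n + 1), n.choose (i + 1) • ((F ^ (i + 1)) a * (G ^ (n - i)) b)
        = ∑ i ∈ Finset.range n, n.choose (i + 1) • ((F ^ (i + 1)) a * (G ^ (n - i)) b) := by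
      rw [Finset.sum_range_succ, Nat.choose_succ_self, zero_smul, add_zero]
    rw [h3]
    abel
end

section
/- Let A be an algebra over a commutative ring R, D an R-derivation of A, and for λ ∈ R let A_λ = ∪_{i≥1} Ker((D - λ·id)^i) be the generalized eigenspace of D for λ. Then A_λ · A_μ ⊆ A_{λ+μ} for all λ, μ ∈ R. -/
/-- For an `R`-algebra `A` with an `R`-derivation `D`, the generalized eigenspaces
`A_λ = ∪_{i ≥ 1} Ker (D - λ·id)^i` satisfy `A_λ · A_μ ⊆ A_{λ+μ}`. -/
theorem stmt8 {R A : Type*} [CommRing R] [Ring A] [Algebra R A]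
    (D : A →ₗ[R] A) (hD : ∀ x y : A, D (x * y) = D x * y + x * D y)
    (l m' : R) (a b : A)
    (ha : ∃ i : ℕ, 1 ≤ i ∧ ((D - l • (LinearMap.id : A →ₗ[R] A)) ^ i) a = 0)
    (hb : ∃ i : ℕ, 1 ≤ i ∧ ((D - m' • (LinearMap.id : A →ₗ[R] A)) ^ i) b = 0) :
    ∃ i : ℕ, 1 ≤ i ∧
      ((D - (l + m') • (LinearMap.id : A →ₗ[R] A)) ^ i) (a * b) = 0 := by
  obtain ⟨i, hi, hia⟩ := ha
  obtain ⟨j, hj, hjb⟩ := hb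
  set P : A →ₗ[R] A := D - l • LinearMap.id with hP
  set Q : A →ₗ[R] A := D - m' • LinearMap.id with hQ
  set E : A →ₗ[R] A := D - (l + m') • LinearMap.id with hE
  set μ : TensorProduct R A A →ₗ[R] A := LinearMap.mul' R A with hμ
  set X : TensorProduct R A A →ₗ[R] TensorProduct R A A :=
    TensorProduct.map P LinearMap.id with hX
  set Y : TensorProduct R A A →ₗ[R] TensorProduct R A A :=
    TensorProduct.map LinearMap.id Q with hY
  have hXpow : ∀ (k : ℕ) (x y : A), (X ^ k) (x ⊗ₜ[R] y) = (P ^ k) x ⊗ₜ[R] y := by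
    intro k
    induction k with
    | zero => intro x y; simp
    | succ n ih =>
      intro x y
      rw [pow_succ, pow_succ]
      simp [Module.End.mul_apply, ih, hX]
  have hYpow : ∀ (k : ℕ) (x y : A), (Y ^ k) (x ⊗ₜ[R] y) = x ⊗ₜ[R] (Q ^ k) y := by
    intro k
    induction k with
    | zero => intro x y; simp
    | succ n ih =>
      intro x y
      rw [pow_succ, pow_succ]
      simp [Module.End.mul_apply, ih, hY]
  have hcomm : Commute X Y := by
    show X * Y = Y * X
    apply TensorProduct.ext'
    intro x y
    simp [Module.End.mul_apply, hX, hY]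
  have hstep : μ ∘ₗ (X + Y) = E ∘ₗ μ := by
    apply TensorProduct.ext'
    intro x y
    simp only [LinearMap.comp_apply, LinearMap.add_apply, hX, hY,
      TensorProduct.map_tmul, LinearMap.id_apply, hμ, LinearMap.mul'_apply,
      map_add, hE, LinearMap.sub_apply, LinearMap.smul_apply, hP, hQ, hD x y]
    rw [sub_mul, mul_sub, smul_mul_assoc, mul_smul_comm, add_smul]
    abel
  have hn : ∀ n : ℕ, μ ∘ₗ ((X + Y) ^ n) = (E ^ n) ∘ₗ μ := by
    intro n
    induction n with
    | zero => ext v; simp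
    | succ n ih =>
      rw [pow_succ, pow_succ]
      calc μ ∘ₗ ((X + Y) ^ n * (X + Y)) = (μ ∘ₗ ((X + Y) ^ n)) ∘ₗ (X + Y) := rfl
        _ = ((E ^ n) ∘ₗ μ) ∘ₗ (X + Y) := by rw [ih]
        _ = (E ^ n) ∘ₗ (μ ∘ₗ (X + Y)) := rfl
        _ = (E ^ n) ∘ₗ (E ∘ₗ μ) := by rw [hstep]
        _ = ((E ^ n) * E) ∘ₗ μ := rfl
  refine ⟨i + j - 1, by omega, ?_⟩
  have h1 : (E ^ (i + j - 1)) (a * b) = μ (((X + Y) ^ (i + j - 1)) (a ⊗ₜ[R] b)) := by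
    rw [← LinearMap.comp_apply, hn]
    simp [hμ]
  rw [h1, hcomm.add_pow]
  rw [LinearMap.sum_apply, map_sum]
  apply Finset.sum_eq_zero
  intro k hk
  simp only [Finset.mem_range] at hk
  have hzero : (X ^ k * Y ^ (i + j - 1 - k)) (a ⊗ₜ[R] b) = 0 := by
    rw [Module.End.mul_apply, hYpow, hXpow]
    rcases le_or_gt i k with h | h
    · have : (P ^ k) a = 0 := by
        rw [show k = (k - i) + i by omega, pow_add, Module.End.mul_apply, hia, map_zero]
      rw [this, TensorProduct.zero_tmul]
    · have : (Q ^ (i + j - 1 - k)) b = 0 := by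
        rw [show i + j - 1 - k = (i + j - 1 - k - j) + j by omega, pow_add,
          Module.End.mul_apply, hjb, map_zero]
      rw [this, TensorProduct.tmul_zero]
  rw [← (Nat.cast_commute ((i + j - 1).choose k)
      (X ^ k * Y ^ (i + j - 1 - k))).eq,
    ← nsmul_eq_mul, LinearMap.smul_apply, hzero, smul_zero, map_zero]
end

section
/- Let R be a commutative ring whose additive group is torsion-free. Then every nonempty finite subset A of R^n has at least one extremal element, i.e., an element λ ∈ A such that for no m ≥ 1 can mλ be written as a linear combination of elements of A \ {λ} with positive integer coefficients summing to at most m. -/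
/-- Let `R` be a commutative ring whose additive group is torsion-free. Then every nonempty
finite subset `A` of `R^n` has an extremal element: some `λ ∈ A` such that for no `m ≥ 1`
can `m λ` be written as a linear combination of elements of `A \ {λ}` with positive integer
coefficients (equivalently, nonnegative coefficients with sum at least 1) summing to at most
`m`. -/
theorem stmt9 {R : Type*} [CommRing R] [DecidableEq R]
    (htf : ∀ (k : ℕ) (r : R), k ≠ 0 → k • r = 0 → r = 0)
    (n : ℕ) (A : Finset (Fin n → R)) (hA : A.Nonempty) :
    ∃ l ∈ A, ∀ m : ℕ, 1 ≤ m →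
      ¬ ∃ c : (Fin n → R) → ℕ,
        1 ≤ ∑ μ ∈ A.erase l, c μ ∧
        (∑ μ ∈ A.erase l, c μ) ≤ m ∧
        m • l = ∑ μ ∈ A.erase l, c μ • μ := by
  classical
  haveI hnz : NoZeroSMulDivisors ℤ (Fin n → R) := by
    refine ⟨fun {c v} h => ?_⟩
    by_cases hc : c = 0
    · exact Or.inl hc
    · refine Or.inr (funext fun i => ?_)
      have hv : c • v i = 0 := by
        have := congrFun h i
        simpa using this
      refine htf c.natAbs (v i) (Int.natAbs_ne_zero.mpr hc) ?_
      have hns : (c.natAbs : ℤ) • v i = c.natAbs • v i := natCast_zsmul _ _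
      rcases Int.natAbs_eq c with he | he
      · rw [← hns, ← he, hv]
      · rw [← hns, ← neg_neg (c.natAbs : ℤ), ← he, neg_zsmul, hv, neg_zero]
  set M := Submodule.span ℤ ((A : Set (Fin n → R))) with hMdef
  haveI : Module.Finite ℤ M := Module.Finite.span_of_finite ℤ A.finite_toSet
  haveI : Module.Free ℤ M := Module.free_of_finite_type_torsion_free'
  set ι := Module.Free.ChooseBasisIndex ℤ M with hι
  let b : Module.Basis ι ℤ M := Module.Free.chooseBasis ℤ M
  let ψ : M →ₗ[ℤ] (ι → ℝ) :=
    { toFun := fun x i => ((b.repr x) i : ℝ)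
      map_add' := by intro x y; funext i; simp
      map_smul' := by intro c x; funext i; push_cast [map_smul]; simp }
  have hinj : Function.Injective ψ := by
    intro x y h
    apply b.repr.injective
    ext i
    have h2 : ((b.repr x) i : ℝ) = ((b.repr y) i : ℝ) := congrFun h i
    exact_mod_cast h2
  by_cases hz : ∀ a ∈ A, a = (0 : Fin n → R)
  · obtain ⟨a0, ha0⟩ := hA
    refine ⟨a0, ha0, fun m hm => ?_⟩
    rintro ⟨c, h1, h2, h3⟩
    have he : A.erase a0 = ∅ := by
      rw [Finset.eq_empty_iff_forall_notMem]
      intro μ hμ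
      exact (Finset.ne_of_mem_erase hμ) ((hz μ (Finset.mem_of_mem_erase hμ)).trans
        (hz a0 ha0).symm)
    rw [he] at h1
    simp at h1
  · push_neg at hz
    obtain ⟨a₀, ha₀A, ha₀⟩ := hz
    -- the finite image of A in ℝ^ι
    let B : Finset (ι → ℝ) := A.attach.image fun a => ψ ⟨a.1, Submodule.subset_span a.2⟩
    let P : Set (ι → ℝ) := convexHull ℝ (insert 0 (B : Set (ι → ℝ)))
    have hPcompact : IsCompact P :=
      ((B.finite_toSet).insert 0).isCompact_convexHull (𝕜 := ℝ)
    have hPconvex : Convex ℝ P := convex_convexHull _ _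
    have hKM := closure_convexHull_extremePoints hPcompact hPconvex
    -- there is a nonzero extreme point
    have hex : ∃ x ∈ P.extremePoints ℝ, x ≠ 0 := by
      by_contra hcon
      push_neg at hcon
      have hsub : P.extremePoints ℝ ⊆ {0} := fun x hx => hcon x hx
      have : P ⊆ {0} := by
        rw [← hKM]
        have : convexHull ℝ (P.extremePoints ℝ) ⊆ ({0} : Set (ι → ℝ)) :=
          convexHull_min hsub (convex_singleton 0)
        calc closure (convexHull ℝ (P.extremePoints ℝ)) ⊆ closure ({0} : Set (ι → ℝ)) :=
              closure_mono this
          _ = {0} := closure_singleton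
      have hmem : ψ ⟨a₀, Submodule.subset_span ha₀A⟩ ∈ P := by
        apply subset_convexHull
        exact Set.mem_insert_iff.mpr (Or.inr (by
          simp only [B, Finset.coe_image, Set.mem_image]
          exact ⟨⟨a₀, ha₀A⟩, by simp, rfl⟩))
      have := this hmem
      simp only [Set.mem_singleton_iff] at this
      have : (⟨a₀, Submodule.subset_span ha₀A⟩ : M) = 0 := by
        apply hinj; rw [this, map_zero]
      exact ha₀ (by simpa using congrArg Subtype.val this)
    obtain ⟨x, hxext, hx0⟩ := hex
    have hxB : x ∈ (B : Set (ι → ℝ)) := by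
      have := extremePoints_convexHull_subset hxext
      rcases Set.mem_insert_iff.mp this with h | h
      · exact absurd h hx0
      · exact h
    obtain ⟨a, _, hax⟩ := Finset.mem_image.mp hxB
    refine ⟨a.1, a.2, fun m hm => ?_⟩
    rintro ⟨c, h1, h2, h3⟩
    set l := a.1 with hl
    have hlA : l ∈ A := a.2
    set lhat : M := ⟨l, Submodule.subset_span hlA⟩ with hlhat
    have hxl : x = ψ lhat := by rw [← hax]
    -- lift the equation to M
    let S := (A.erase l).attach
    let muhat : {μ // μ ∈ A.erase l} → M := fun μ =>
      ⟨μ.1, Submodule.subset_span (Finset.mem_of_mem_erase μ.2)⟩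
    have hMeq : m • lhat = ∑ μ ∈ S, c μ.1 • muhat μ := by
      apply Subtype.ext
      push_cast [Submodule.coe_sum]
      rw [h3, ← Finset.sum_attach (A.erase l) (fun μ => c μ • μ)]
    -- push to ℝ^ι
    have hReq : (m : ℕ) • ψ lhat = ∑ μ ∈ S, c μ.1 • ψ (muhat μ) := by
      rw [← map_nsmul, hMeq, map_sum]
      congr 1
      funext μ
      rw [map_nsmul]
    set s := ∑ μ ∈ A.erase l, c μ with hs
    have hsS : ∑ μ ∈ S, c μ.1 = s := Finset.sum_attach _ _
    have hm0 : (m : ℝ) ≠ 0 := Nat.cast_ne_zero.mpr (by omega)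
    have hs0 : (s : ℝ) ≠ 0 := Nat.cast_ne_zero.mpr (by omega)
    -- the points
    let y : {μ // μ ∈ A.erase l} → (ι → ℝ) := fun μ => ψ (muhat μ)
    have hyB : ∀ μ ∈ S, y μ ∈ (B : Set (ι → ℝ)) \ {x} := by
      intro μ _
      constructor
      · simp only [B, Finset.coe_image, Set.mem_image]
        refine ⟨⟨μ.1, Finset.mem_of_mem_erase μ.2⟩, by simp, rfl⟩
      · simp only [Set.mem_singleton_iff]
        intro hyx
        rw [hxl] at hyx
        have : muhat μ = lhat := hinj hyx
        exact Finset.ne_of_mem_erase μ.2 (by simpa [muhat, lhat] using congrArg Subtype.val this)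
    -- x is in the convex hull of insert 0 (B \ {x})
    let Qs : Set (ι → ℝ) := insert 0 ((B : Set (ι → ℝ)) \ {x})
    let Q : Set (ι → ℝ) := convexHull ℝ Qs
    have hcsum : ∑ μ ∈ S, ((c μ.1 : ℝ)) = (s : ℝ) := by
      rw [← hsS]; push_cast; rfl
    have hwmem : S.centerMass (fun μ => (c μ.1 : ℝ)) y ∈ convexHull ℝ ((B : Set (ι → ℝ)) \ {x}) := by
      apply Finset.centerMass_mem_convexHull
      · intro i _; positivity
      · rw [hcsum]; positivity
      · exact hyB
    have hwval : S.centerMass (fun μ => (c μ.1 : ℝ)) y = ((s : ℝ)⁻¹ * (m : ℝ)) • x := by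
      rw [Finset.centerMass, hcsum, mul_smul]
      congr 1
      have : ∑ μ ∈ S, ((c μ.1 : ℝ)) • y μ = ∑ μ ∈ S, c μ.1 • y μ := by
        refine Finset.sum_congr rfl fun μ _ => ?_
        rw [Nat.cast_smul_eq_nsmul]
      rw [this, ← hReq, hxl, ← Nat.cast_smul_eq_nsmul ℝ]
    have hQconv : Convex ℝ Q := convex_convexHull _ _
    have h0Q : (0 : ι → ℝ) ∈ Q := subset_convexHull _ _ (Set.mem_insert _ _)
    have hwQ : S.centerMass (fun μ => (c μ.1 : ℝ)) y ∈ Q :=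
      convexHull_mono (Set.subset_insert _ _) hwmem
    have hxQ : x ∈ Q := by
      have hsm0 : (0:ℝ) ≤ (s : ℝ) / (m : ℝ) := by positivity
      have hsm1 : (s : ℝ) / (m : ℝ) ≤ 1 := by
        rw [div_le_one (by positivity)]
        exact_mod_cast h2
      have := hQconv.smul_mem_of_zero_mem h0Q hwQ ⟨hsm0, hsm1⟩
      rw [hwval, smul_smul] at this
      have hcoe : (s : ℝ) / (m : ℝ) * ((s : ℝ)⁻¹ * (m : ℝ)) = 1 := by
        field_simp
      rwa [hcoe, one_smul] at this
    -- x is an extreme point of Q since Q ⊆ P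
    have hQP : Q ⊆ P := convexHull_mono (Set.insert_subset_insert Set.diff_subset)
    have hxextQ : x ∈ Q.extremePoints ℝ := by
      rw [mem_extremePoints]
      exact ⟨hxQ, fun x₁ hx₁ x₂ hx₂ hseg => ⟨hxext.2 (hQP hx₁) (hQP hx₂) hseg,
        hxext.2 (hQP hx₂) (hQP hx₁) (openSegment_symm ℝ x₁ x₂ ▸ hseg)⟩⟩
    have := extremePoints_convexHull_subset hxextQ
    rcases Set.mem_insert_iff.mp this with h | h
    · exact hx0 h
    · exact h.2 rfl
end

section
/- Let R be a commutative ring and A a commutative R-algebra whose additive group is torsion-free. If D is an R-derivation of A that is locally integral over R (for each a ∈ A there is a D-invariant R-subalgebra A₁ containing a and a monic polynomial p(t) ∈ R[t] with p(D) vanishing on A₁), then the image of D is contained in the nilradical of A. -/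
open Polynomial Finset

section Aux

variable {R A : Type*} [CommRing R] [CommRing A] [Algebra R A]

/-- Iterated Leibniz rule for a derivation. -/
private lemma iter_leibniz (D : Derivation R A A) (k : ℕ) (x y : A) :
    ((D.toLinearMap : Module.End R A) ^ k) (x * y) =
      ∑ i ∈ range (k + 1), k.choose i •
        (((D.toLinearMap : Module.End R A) ^ i) x *
          ((D.toLinearMap : Module.End R A) ^ (k - i)) y) := by
  set E : Module.End R A := D.toLinearMap with hE
  have hmul : ∀ u v : A, E (u * v) = E u * v + u * E v := by
    intro u v
    have h := D.leibniz u v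
    simp only [smul_eq_mul] at h
    show D (u * v) = D u * v + u * D v
    rw [h]; ring
  have hpow : ∀ (j : ℕ) (u : A), (E ^ (j + 1)) u = E ((E ^ j) u) := by
    intro j u; rw [pow_succ', Module.End.mul_apply]
  induction k with
  | zero => simp
  | succ k ih =>
    rw [hpow, ih, map_sum]
    set t : ℕ → A := fun j => (E ^ j) x * (E ^ (k + 1 - j)) y with ht
    have hterm : ∀ i ∈ range (k + 1),
        E (k.choose i • ((E ^ i) x * (E ^ (k - i)) y)) =
          k.choose i • t (i + 1) + k.choose i • t i := by
      intro i hi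
      rw [mem_range, Nat.lt_succ_iff] at hi
      rw [map_nsmul, hmul, smul_add]
      congr 1
      · simp only [ht, Nat.succ_sub_succ]
        rw [hpow]
      · simp only [ht]
        rw [Nat.succ_sub hi, hpow]
    rw [sum_congr rfl hterm, sum_add_distrib]
    have hS2 : ∑ i ∈ range (k + 1), k.choose i • t i
        = ∑ i ∈ range (k + 1), k.choose (i + 1) • t (i + 1) + t 0 := by
      rw [Finset.sum_range_succ (fun i => k.choose (i + 1) • t (i + 1)) k,
        Nat.choose_succ_self, zero_smul, add_zero,
        Finset.sum_range_succ' (fun i => k.choose i • t i) k]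
      simp
    have hT : ∑ j ∈ range (k + 1 + 1), (k + 1).choose j • t j
        = (∑ i ∈ range (k + 1), k.choose i • t (i + 1)
            + ∑ i ∈ range (k + 1), k.choose (i + 1) • t (i + 1)) + t 0 := by
      rw [Finset.sum_range_succ' (fun j => (k + 1).choose j • t j) (k + 1)]
      simp only [Nat.choose_succ_succ, add_smul, Nat.choose_zero_right, one_smul]
      rw [sum_add_distrib]
    rw [hS2, hT]
    abel

section G

variable (D : Derivation R A A) (n : ℕ)

/-- `G D n q [x₁, …, xₘ]` is the "strictly positive multi-index part" of the expansion of
`q(D)(x₁ ⋯ xₘ)` by the multinomial Leibniz rule. -/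
private noncomputable def G : Polynomial R → List A → A
  | q, [] => algebraMap R A (q.coeff 0)
  | q, y :: xs => ∑ j ∈ Icc 1 n,
      ((D.toLinearMap : Module.End R A) ^ j) y * G (q.hasseDeriv j) xs

@[simp] private lemma G_nil (q : Polynomial R) : G D n q [] = algebraMap R A (q.coeff 0) := rfl

private lemma G_cons (q : Polynomial R) (y : A) (xs : List A) :
    G D n q (y :: xs) = ∑ j ∈ Icc 1 n,
      ((D.toLinearMap : Module.End R A) ^ j) y * G D n (q.hasseDeriv j) xs := rfl

private lemma G_zero (xs : List A) : G D n (0 : Polynomial R) xs = 0 := by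
  induction xs with
  | nil => simp
  | cons y xs ih =>
    rw [G_cons]
    refine Finset.sum_eq_zero fun j _ => ?_
    rw [map_zero, ih, mul_zero]

private lemma G_nsmul (k : ℕ) (q : Polynomial R) (xs : List A) :
    G D n (k • q) xs = k • G D n q xs := by
  induction xs generalizing q with
  | nil => simp
  | cons y xs ih =>
    rw [G_cons, G_cons, smul_sum]
    refine Finset.sum_congr rfl fun j _ => ?_
    rw [map_nsmul, ih, mul_smul_comm]

private lemma G_key (q : Polynomial R) (hq : q.natDegree ≤ n) (y z : A) (xs : List A) :
    G D n q (y :: z :: xs) =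
      G D n q (y * z :: xs) - y * G D n q (z :: xs) - z * G D n q (y :: xs) := by
  set E : Module.End R A := D.toLinearMap with hE
  set f : ℕ → ℕ → A := fun i j =>
    (i + j).choose i • ((E ^ i) y * ((E ^ j) z * G D n (q.hasseDeriv (i + j)) xs)) with hf
  have hfzero : ∀ i j : ℕ, n < i + j → f i j = 0 := by
    intro i j hij
    simp only [hf]
    rw [Polynomial.hasseDeriv_eq_zero_of_lt_natDegree _ _ (lt_of_le_of_lt hq hij), G_zero,
      mul_zero, mul_zero, smul_zero]
  have hyz : G D n q (y * z :: xs) =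
      y * G D n q (z :: xs) + z * G D n q (y :: xs)
        + ∑ k ∈ Icc 1 n, ∑ i ∈ Ioo 0 k, f i (k - i) := by
    rw [G_cons, G_cons, G_cons, mul_sum, mul_sum, ← sum_add_distrib, ← sum_add_distrib]
    refine Finset.sum_congr rfl fun k hk => ?_
    rw [mem_Icc] at hk
    rw [iter_leibniz, sum_mul]
    have hins : range (k + 1) = insert 0 (insert k (Ioo 0 k)) := by
      ext i
      simp only [mem_range, mem_insert, mem_Ioo]
      omega
    have h0k : (0 : ℕ) ∉ insert k (Ioo 0 k) := by
      simp only [mem_insert, mem_Ioo]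
      omega
    have hkk : k ∉ Ioo 0 k := by simp
    rw [hins, Finset.sum_insert h0k, Finset.sum_insert hkk]
    have e1 : (k.choose 0 • ((E ^ 0) y * (E ^ (k - 0)) z)) * G D n (q.hasseDeriv k) xs
        = y * ((E ^ k) z * G D n (q.hasseDeriv k) xs) := by
      simp only [Nat.choose_zero_right, one_smul, pow_zero, Module.End.one_apply, Nat.sub_zero]
      ring
    have e2 : (k.choose k • ((E ^ k) y * (E ^ (k - k)) z)) * G D n (q.hasseDeriv k) xs
        = z * ((E ^ k) y * G D n (q.hasseDeriv k) xs) := by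
      simp only [Nat.choose_self, one_smul, Nat.sub_self, pow_zero, Module.End.one_apply]
      ring
    have e3 : ∀ i ∈ Ioo 0 k,
        (k.choose i • ((E ^ i) y * (E ^ (k - i)) z)) * G D n (q.hasseDeriv k) xs
          = f i (k - i) := by
      intro i hi
      rw [mem_Ioo] at hi
      simp only [hf]
      rw [Nat.add_sub_cancel' (le_of_lt hi.2)]
      rw [smul_mul_assoc, mul_assoc]
    rw [e1, e2, Finset.sum_congr rfl e3]
    ring
  have hyzs : G D n q (y :: z :: xs) = ∑ i ∈ Icc 1 n, ∑ j ∈ Icc 1 n, f i j := by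
    rw [G_cons]
    refine Finset.sum_congr rfl fun i hi => ?_
    rw [G_cons, mul_sum]
    refine Finset.sum_congr rfl fun j hj => ?_
    have hcomp : (q.hasseDeriv i).hasseDeriv j = (j + i).choose j • q.hasseDeriv (j + i) := by
      have h := Polynomial.hasseDeriv_comp (R := R) j i
      have := LinearMap.congr_fun h q
      simpa using this
    rw [hcomp, G_nsmul, mul_smul_comm, mul_smul_comm]
    simp only [hf]
    rw [add_comm j i]
    congr 1
    rw [Nat.choose_symm_add]
  have hR : ∑ i ∈ Icc 1 n, ∑ j ∈ Icc 1 n, f i j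
      = ∑ p ∈ ((Icc 1 n).sigma fun _ => Icc 1 n).filter (fun p => p.1 + p.2 ≤ n),
          f p.1 p.2 := by
    rw [Finset.sum_sigma']
    rw [← Finset.sum_filter_add_sum_filter_not ((Icc 1 n).sigma fun _ => Icc 1 n)
      (fun p => p.1 + p.2 ≤ n)]
    have : ∑ p ∈ ((Icc 1 n).sigma fun _ => Icc 1 n).filter (fun p => ¬ p.1 + p.2 ≤ n),
        f p.1 p.2 = 0 := by
      refine Finset.sum_eq_zero fun p hp => ?_
      rw [mem_filter] at hp
      exact hfzero _ _ (by omega)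
    rw [this, add_zero]
  have hL : ∑ k ∈ Icc 1 n, ∑ i ∈ Ioo 0 k, f i (k - i)
      = ∑ p ∈ ((Icc 1 n).sigma fun _ => Icc 1 n).filter (fun p => p.1 + p.2 ≤ n),
          f p.1 p.2 := by
    rw [Finset.sum_sigma']
    refine Finset.sum_nbij' (fun p => ⟨p.2, p.1 - p.2⟩) (fun p => ⟨p.1 + p.2, p.1⟩)
      ?_ ?_ ?_ ?_ ?_
    · rintro ⟨k, i⟩ hm
      simp only [mem_sigma, mem_Icc, mem_Ioo] at hm
      simp only [mem_filter, mem_sigma, mem_Icc]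
      omega
    · rintro ⟨i, j⟩ hm
      simp only [mem_filter, mem_sigma, mem_Icc] at hm
      simp only [mem_sigma, mem_Icc, mem_Ioo]
      omega
    · rintro ⟨k, i⟩ hm
      simp only [mem_sigma, mem_Icc, mem_Ioo] at hm
      show (⟨i + (k - i), i⟩ : Σ _ : ℕ, ℕ) = ⟨k, i⟩
      have hk : i + (k - i) = k := by omega
      rw [hk]
    · rintro ⟨i, j⟩ hm
      simp only [mem_filter, mem_sigma, mem_Icc] at hm
      show (⟨i, i + j - i⟩ : Σ _ : ℕ, ℕ) = ⟨i, j⟩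
      have hj : i + j - i = j := by omega
      rw [hj]
    · rintro ⟨k, i⟩ hm
      rfl
  rw [hyzs, hyz, hR, ← hL]
  abel

private lemma range_succ_eq_insert (n : ℕ) : range (n + 1) = insert 0 (Icc 1 n) := by
  ext i
  simp only [mem_range, mem_insert, mem_Icc]
  omega

/-- On singletons from `A₁`, `G` vanishes. -/
private lemma G_single (A₁ : Subalgebra R A) (p : Polynomial R)
    (hann : ∀ x ∈ A₁, (Polynomial.aeval (D.toLinearMap : Module.End R A) p) x = 0)
    (hn : n = p.natDegree) :
    ∀ x ∈ A₁, G D n p [x] = 0 := by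
  set E : Module.End R A := D.toLinearMap with hE
  have haev : ∀ x : A, (Polynomial.aeval E p) x
      = ∑ i ∈ range (n + 1), p.coeff i • (E ^ i) x := by
    intro x
    rw [hn, Polynomial.aeval_eq_sum_range]
    rw [LinearMap.sum_apply]
    refine Finset.sum_congr rfl fun i _ => ?_
    rw [LinearMap.smul_apply]
  have hE1 : ∀ i : ℕ, 1 ≤ i → (E ^ i) (1 : A) = 0 := by
    intro i hi
    obtain ⟨j, rfl⟩ := Nat.exists_eq_add_of_le hi
    rw [add_comm, pow_succ, Module.End.mul_apply]
    have : E (1 : A) = 0 := D.map_one_eq_zero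
    rw [this, map_zero]
  have hc0 : algebraMap R A (p.coeff 0) = 0 := by
    have h1 := hann 1 (one_mem A₁)
    rw [haev, range_succ_eq_insert, Finset.sum_insert (by simp)] at h1
    have hrest : ∑ i ∈ Icc 1 n, p.coeff i • (E ^ i) (1 : A) = 0 := by
      refine Finset.sum_eq_zero fun i hi => ?_
      rw [mem_Icc] at hi
      rw [hE1 i hi.1, smul_zero]
    rw [hrest, add_zero, pow_zero, Module.End.one_apply] at h1
    rwa [Algebra.algebraMap_eq_smul_one]
  intro x hx
  have hax := hann x hx
  rw [haev, range_succ_eq_insert, Finset.sum_insert (by simp)] at hax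
  have h0 : p.coeff 0 • (E ^ 0) x = 0 := by
    rw [pow_zero, Module.End.one_apply, Algebra.smul_def, hc0, zero_mul]
  rw [h0, zero_add] at hax
  rw [G_cons, ← hax]
  refine Finset.sum_congr rfl fun j _ => ?_
  rw [G_nil]
  have hco : ((p.hasseDeriv j).coeff 0) = p.coeff j := by
    rw [Polynomial.hasseDeriv_coeff]
    simp
  rw [hco, Algebra.smul_def]
  ring

/-- `G` vanishes on any nonempty list of elements of `A₁`. -/
private lemma G_vanish (A₁ : Subalgebra R A) (p : Polynomial R)
    (hann : ∀ x ∈ A₁, (Polynomial.aeval (D.toLinearMap : Module.End R A) p) x = 0)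
    (hn : n = p.natDegree) :
    ∀ (m : ℕ) (xs : List A), xs.length = m → xs ≠ [] → (∀ x ∈ xs, x ∈ A₁) →
      G D n p xs = 0 := by
  intro m
  induction m using Nat.strong_induction_on with
  | _ m ih =>
    intro xs hlen hne hmem
    match xs, hne with
    | [x], _ => exact G_single D n A₁ p hann hn x (hmem x (by simp))
    | y :: z :: t, _ =>
      have hdeg : p.natDegree ≤ n := le_of_eq hn.symm
      rw [G_key D n p hdeg y z t]
      have hyz : G D n p (y * z :: t) = 0 := by
        refine ih (t.length + 1) (by simp only [List.length_cons] at hlen; omega) _ rfl (by simp) ?_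
        intro u hu
        rcases List.mem_cons.mp hu with h | h
        · exact h ▸ mul_mem (hmem y (by simp)) (hmem z (by simp))
        · exact hmem u (by simp [h])
      have hz : G D n p (z :: t) = 0 := by
        refine ih (t.length + 1) (by simp only [List.length_cons] at hlen; omega) _ rfl (by simp) ?_
        intro u hu
        exact hmem u (by simp [List.mem_cons.mp hu])
      have hy : G D n p (y :: t) = 0 := by
        refine ih (t.length + 1) (by simp only [List.length_cons] at hlen; omega) _ rfl (by simp) ?_
        intro u hu
        rcases List.mem_cons.mp hu with h | h
        · exact h ▸ hmem y (by simp)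
        · exact hmem u (by simp [h])
      rw [hyz, hz, hy]
      ring

/-- `G` on a replicated list computes an iterated derivative coefficient times a power. -/
private lemma G_replicate (hn : 1 ≤ n) (a : A) :
    ∀ (m : ℕ) (q : Polynomial R), q.natDegree ≤ m →
      G D n q (List.replicate m a)
        = (Polynomial.derivative^[m] q).coeff 0 • (D a) ^ m := by
  intro m
  induction m with
  | zero =>
    intro q _
    simp [Algebra.algebraMap_eq_smul_one]
  | succ m ih =>
    intro q hq
    set E : Module.End R A := D.toLinearMap with hE
    rw [List.replicate_succ, G_cons]
    have hsingle : ∀ j ∈ Icc 1 n, j ≠ 1 →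
        (E ^ j) a * G D n (q.hasseDeriv j) (List.replicate m a) = 0 := by
      intro j hj hj1
      rw [mem_Icc] at hj
      have hj2 : 2 ≤ j := by omega
      have hqd : (q.hasseDeriv j).natDegree ≤ m :=
        le_trans (Polynomial.natDegree_hasseDeriv_le q j) (by omega)
      rw [ih _ hqd]
      have hco : (Polynomial.derivative^[m] (q.hasseDeriv j)).coeff 0 = 0 := by
        rw [Polynomial.coeff_iterate_derivative]
        have : (q.hasseDeriv j).coeff (0 + m) = 0 := by
          rw [zero_add, Polynomial.hasseDeriv_coeff]
          have : q.coeff (m + j) = 0 :=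
            Polynomial.coeff_eq_zero_of_natDegree_lt (by omega)
          rw [this, mul_zero]
        rw [this, smul_zero]
      rw [hco, zero_smul, mul_zero]
    rw [Finset.sum_eq_single 1 hsingle (fun h => absurd (by rw [mem_Icc]; omega) h)]
    have hqd1 : (q.hasseDeriv 1).natDegree ≤ m :=
      le_trans (Polynomial.natDegree_hasseDeriv_le q 1) (by omega)
    rw [ih _ hqd1, Polynomial.hasseDeriv_one']
    have hIt : Polynomial.derivative^[m] (Polynomial.derivative q)
        = Polynomial.derivative^[m + 1] q := by
      rw [Function.iterate_succ_apply]
    rw [hIt, pow_one]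
    have : E a = D a := rfl
    rw [this, mul_smul_comm, ← pow_succ']

end G

end Aux

/-- Let `R` be a commutative ring and `A` a commutative `R`-algebra whose additive group is
torsion-free. If `D` is an `R`-derivation of `A` that is locally integral over `R` (for each
`a ∈ A` there is a `D`-invariant `R`-subalgebra `A₁` containing `a` and a monic polynomial
`p ∈ R[t]` with `p(D)` vanishing on `A₁`), then `Im D ⊆ nil(A)`. -/
theorem stmt10 {R A : Type*} [CommRing R] [CommRing A] [Algebra R A]
    (htf : ∀ (k : ℕ) (a : A), k ≠ 0 → k • a = 0 → a = 0)
    (D : Derivation R A A)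
    (hloc : ∀ a : A, ∃ (A₁ : Subalgebra R A) (p : Polynomial R),
      a ∈ A₁ ∧ (∀ x ∈ A₁, D x ∈ A₁) ∧ p.Monic ∧
        ∀ x ∈ A₁, (Polynomial.aeval (D.toLinearMap : Module.End R A) p) x = 0) :
    ∀ a : A, IsNilpotent (D a) := by
  intro a
  obtain ⟨A₁, p, ha, hinv, hmonic, hann⟩ := hloc a
  by_cases hn0 : p.natDegree = 0
  · have hp1 : p = 1 := hmonic.natDegree_eq_zero.mp hn0
    have h1 := hann 1 (one_mem A₁)
    rw [hp1] at h1
    rw [Polynomial.aeval_one, Module.End.one_apply] at h1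
    have h10 : (1 : A) = 0 := h1
    exact ⟨1, by rw [pow_one, ← mul_one (D a), h10, mul_zero]⟩
  · set n := p.natDegree with hn
    have hn1 : 1 ≤ n := Nat.one_le_iff_ne_zero.mpr hn0
    have hvan : G D n p (List.replicate n a) = 0 := by
      refine G_vanish D n A₁ p hann hn n _ (by simp) ?_ ?_
      · exact List.ne_nil_of_length_pos (by simp only [List.length_replicate]; omega)
      · intro x hx
        rw [List.eq_of_mem_replicate hx]
        exact ha
    have hrep := G_replicate D n hn1 a n p (le_of_eq hn.symm)
    rw [hvan] at hrep
    have hco : (Polynomial.derivative^[n] p).coeff 0 = n.factorial • (1 : R) := by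
      rw [Polynomial.coeff_iterate_derivative, zero_add, Nat.descFactorial_self,
        show p.coeff n = 1 from hmonic.coeff_natDegree]
    rw [hco] at hrep
    have hsm : (n.factorial • (1 : R)) • (D a) ^ n = n.factorial • (D a) ^ n := by
      rw [nsmul_eq_mul, mul_one, Nat.cast_smul_eq_nsmul]
    rw [hsm] at hrep
    exact ⟨n, htf n.factorial _ (Nat.factorial_ne_zero n) hrep.symm⟩
end

section
/- Let R be a commutative ring and A a commutative R-algebra whose additive group is torsion-free. If D is a nilpotent R-derivation of A (D^N = 0 for some N), then for every a ∈ A, D(a) is nilpotent. -/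
section Aux

variable {R A : Type*} [CommRing R] [CommRing A] [Algebra R A]

private lemma iterD (D : Derivation R A A) (n : ℕ) (y : A) :
    (D.toLinearMap ^ (n + 1)) y = D ((D.toLinearMap ^ n) y) := by
  rw [pow_succ']; rfl

/-- The ideal spanned by the second-and-higher derivatives of `x` is `D`-stable. -/
private lemma aux_stable (D : Derivation R A A) (x : A) {y : A}
    (hy : y ∈ Ideal.span (Set.range fun i : ℕ => (D.toLinearMap ^ (i + 2)) x)) :
    D y ∈ Ideal.span (Set.range fun i : ℕ => (D.toLinearMap ^ (i + 2)) x) := by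
  set J := Ideal.span (Set.range fun i : ℕ => (D.toLinearMap ^ (i + 2)) x) with hJ
  induction hy using Submodule.span_induction with
  | mem z hz =>
      obtain ⟨i, rfl⟩ := hz
      have h1 : D ((D.toLinearMap ^ (i + 2)) x) = (D.toLinearMap ^ (i + 1 + 2)) x := by
        rw [show i + 1 + 2 = (i + 2) + 1 by ring]
        exact (iterD D (i + 2) x).symm
      rw [h1]
      exact Ideal.subset_span ⟨i + 1, rfl⟩
  | zero => simp
  | add z w hz hw ihz ihw => rw [map_add]; exact J.add_mem ihz ihw
  | smul c z hz ihz =>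
      rw [smul_eq_mul, D.leibniz, smul_eq_mul, smul_eq_mul]
      exact J.add_mem (J.mul_mem_left _ ihz) (J.mul_mem_right _ (show _ ∈ J from hz))

/-- Key: if all higher derivatives (order ≥ 2) of `x` are nilpotent and `D ^ N = 0`,
then `D x` is nilpotent. -/
private lemma aux_key {htf : ∀ (n : ℕ) (a : A), n ≠ 0 → n • a = 0 → a = 0}
    (D : Derivation R A A) (N : ℕ) (hnil : (D.toLinearMap) ^ N = 0)
    (x : A) (hx : ∀ i : ℕ, IsNilpotent ((D.toLinearMap ^ (i + 2)) x)) :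
    IsNilpotent (D x) := by
  set J := Ideal.span (Set.range fun i : ℕ => (D.toLinearMap ^ (i + 2)) x) with hJ
  have hJnil : J ≤ nilradical A := by
    rw [hJ, Ideal.span_le]
    rintro z ⟨i, rfl⟩
    exact hx i
  -- D((D x)^j) ∈ J
  have hDpow : ∀ j : ℕ, D ((D x) ^ j) ∈ J := by
    intro j
    rw [D.leibniz_pow]
    have h2 : D (D x) ∈ J := Ideal.subset_span ⟨0, rfl⟩
    rw [smul_eq_mul, nsmul_eq_mul]
    exact J.mul_mem_left _ (J.mul_mem_left _ h2)
  -- main identity mod J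
  have main : ∀ j : ℕ, j ≤ N → ∃ c ∈ J,
      (D.toLinearMap ^ j) (x ^ N) =
        (N.descFactorial j : A) * (x ^ (N - j) * (D x) ^ j) + c := by
    intro j
    induction j with
    | zero => intro _; exact ⟨0, J.zero_mem, by simp⟩
    | succ j ih =>
        intro hjN
        obtain ⟨c, hc, hval⟩ := ih (Nat.le_of_succ_le hjN)
        refine ⟨(N.descFactorial j : A) * (x ^ (N - j) * D ((D x) ^ j)) + D c,
          J.add_mem (J.mul_mem_left _ (J.mul_mem_left _ (hDpow j))) (aux_stable D x hc), ?_⟩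
        rw [iterD, hval, map_add]
        have hDu : D ((N.descFactorial j : A) * (x ^ (N - j) * (D x) ^ j)) =
            (N.descFactorial j : A) * (D (x ^ (N - j)) * (D x) ^ j
              + x ^ (N - j) * D ((D x) ^ j)) := by
          simp only [Derivation.leibniz, Derivation.map_natCast, smul_eq_mul]
          ring
        rw [hDu]
        have hDx : D (x ^ (N - j)) = (N - j : ℕ) • x ^ (N - j - 1) • D x :=
          D.leibniz_pow x (N - j)
        rw [hDx]
        have hsub : N - j - 1 = N - (j + 1) := by omega
        have hcoeff : (N.descFactorial (j + 1) : A)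
            = ((N - j : ℕ) : A) * (N.descFactorial j : A) := by
          rw [Nat.descFactorial_succ]; push_cast; ring
        rw [hsub, hcoeff, nsmul_eq_mul, smul_eq_mul, pow_succ]
        ring
  obtain ⟨c, hc, hval⟩ := main N le_rfl
  have hzero : (D.toLinearMap ^ N) (x ^ N) = 0 := by rw [hnil]; rfl
  have hmem : (N.factorial : A) * (D x) ^ N ∈ nilradical A := by
    have h0 : (N.factorial : A) * (D x) ^ N = -c := by
      rw [hzero, Nat.sub_self, pow_zero, one_mul, Nat.descFactorial_self] at hval
      linear_combination -hval
    rw [h0]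
    exact neg_mem (hJnil hc)
  obtain ⟨M, hM⟩ := hmem
  have hM' : ((N.factorial : A) * (D x) ^ N) ^ (M + 1) = 0 := by
    rw [pow_succ, hM, zero_mul]
  have hkey : (N.factorial ^ (M + 1) : ℕ) • ((D x) ^ (N * (M + 1))) = 0 := by
    rw [nsmul_eq_mul]
    push_cast
    rw [← hM', mul_pow, ← pow_mul]
  have hz := htf _ _ (by positivity) hkey
  exact ⟨N * (M + 1), hz⟩

end Aux

/-- If `A` is a commutative `R`-algebra whose additive group is torsion-free and `D` is a
nilpotent `R`-derivation of `A`, then `D a` is nilpotent for every `a ∈ A`. -/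
theorem stmt11 {R A : Type*} [CommRing R] [CommRing A] [Algebra R A]
    (htf : ∀ (n : ℕ) (a : A), n ≠ 0 → n • a = 0 → a = 0)
    (D : Derivation R A A) (N : ℕ) (hN : 1 ≤ N) (hnil : (D.toLinearMap) ^ N = 0)
    (a : A) : IsNilpotent (D a) := by
  suffices h : ∀ k : ℕ, ∀ x : A, (D.toLinearMap ^ k) x = 0 → IsNilpotent (D x) by
    exact h N a (by rw [hnil]; rfl)
  intro k
  induction k with
  | zero => intro x hx; simp only [pow_zero, Module.End.one_apply] at hx; simp [hx]
  | succ k ih =>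
      intro x hx
      refine aux_key (htf := htf) D N hnil x ?_
      intro i
      have hkill : (D.toLinearMap ^ k) ((D.toLinearMap ^ (i + 1)) x) = 0 := by
        have hswap : (D.toLinearMap ^ k) ((D.toLinearMap ^ (i + 1)) x)
            = (D.toLinearMap ^ i) ((D.toLinearMap ^ (k + 1)) x) := by
          rw [← Module.End.mul_apply, ← Module.End.mul_apply, ← pow_add, ← pow_add,
            show k + (i + 1) = i + (k + 1) by ring]
        rw [hswap, hx, map_zero]
      have := ih _ hkill
      have heq : D ((D.toLinearMap ^ (i + 1)) x) = (D.toLinearMap ^ (i + 2)) x := by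
        rw [show i + 2 = (i + 1) + 1 by ring]
        exact (iterD D (i + 1) x).symm
      rwa [heq] at this
end

section
/- Let R be an integral domain of characteristic zero and A a reduced unital R-algebra (not necessarily commutative) that is torsion-free as an R-module. Then A has no nonzero nilpotent R-derivation: if D is an R-derivation of A with D^N = 0 for some N, then D = 0. -/
section Aux

variable {R A : Type*} [CommRing R] [Ring A] [Algebra R A]

lemma leib_aux (D : A →ₗ[R] A) (hD : ∀ x y : A, D (x * y) = D x * y + x * D y) :
    ∀ (m : ℕ) (x y : A), (D ^ m) (x * y) =
      ∑ k ∈ Finset.range (m + 1), m.choose k • ((D ^ k) x * (D ^ (m - k)) y) := by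
  intro m
  induction m with
  | zero => intro x y; simp
  | succ m ih =>
    intro x y
    have h1 : (D ^ (m + 1)) (x * y) = D ((D ^ m) (x * y)) := by
      rw [pow_succ']; rfl
    have hDpow : ∀ (k : ℕ) (z : A), D ((D ^ k) z) = (D ^ (k + 1)) z := by
      intro k z; rw [pow_succ']; rfl
    rw [h1, ih, map_sum]
    have hterm : ∀ k ∈ Finset.range (m + 1),
        D (m.choose k • ((D ^ k) x * (D ^ (m - k)) y)) =
          m.choose k • ((D ^ (k + 1)) x * (D ^ (m - k)) y)
            + m.choose k • ((D ^ k) x * (D ^ (m + 1 - k)) y) := by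
      intro k hk
      rw [Finset.mem_range] at hk
      have hmk : m - k + 1 = m + 1 - k := by omega
      rw [map_nsmul, hD, smul_add, hDpow, hDpow, hmk]
    rw [Finset.sum_congr rfl hterm, Finset.sum_add_distrib]
    -- RHS manipulation
    rw [Finset.sum_range_succ' (fun k => (m + 1).choose k • ((D ^ k) x * (D ^ (m + 1 - k)) y))]
    have hF : ∀ i ∈ Finset.range (m + 1),
        (m + 1).choose (i + 1) • ((D ^ (i + 1)) x * (D ^ (m + 1 - (i + 1))) y) =
          m.choose i • ((D ^ (i + 1)) x * (D ^ (m - i)) y)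
            + m.choose (i + 1) • ((D ^ (i + 1)) x * (D ^ (m - i)) y) := by
      intro i hi
      have h2 : m + 1 - (i + 1) = m - i := by omega
      rw [h2, Nat.choose_succ_succ, add_nsmul]
    rw [Finset.sum_congr rfl hF, Finset.sum_add_distrib]
    have hS2 : ∑ k ∈ Finset.range (m + 1), m.choose k • ((D ^ k) x * (D ^ (m + 1 - k)) y) =
        (∑ i ∈ Finset.range m, m.choose (i + 1) • ((D ^ (i + 1)) x * (D ^ (m - i)) y))
          + m.choose 0 • ((D ^ 0) x * (D ^ (m + 1)) y) := by
      rw [Finset.sum_range_succ' (fun k => m.choose k • ((D ^ k) x * (D ^ (m + 1 - k)) y))]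
      congr 1
      refine Finset.sum_congr rfl ?_
      intro i hi
      rw [Finset.mem_range] at hi
      have : m + 1 - (i + 1) = m - i := by omega
      rw [this]
    rw [hS2]
    have hS3 : ∑ i ∈ Finset.range (m + 1), m.choose (i + 1) • ((D ^ (i + 1)) x * (D ^ (m - i)) y) =
        ∑ i ∈ Finset.range m, m.choose (i + 1) • ((D ^ (i + 1)) x * (D ^ (m - i)) y) := by
      rw [Finset.sum_range_succ, Nat.choose_succ_self, zero_smul, add_zero]
    rw [hS3]
    simp only [pow_zero, Nat.choose_zero_right, Nat.choose_self, one_smul, Module.End.one_apply, Nat.sub_zero]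
    rw [add_assoc]

end Aux

/-- If `R` is an integral domain of characteristic zero and `A` is a reduced unital `R`-algebra
(not necessarily commutative) that is torsion-free as an `R`-module, then `A` has no nonzero
nilpotent `R`-derivation. -/
theorem stmt12 {R A : Type*} [CommRing R] [IsDomain R] [CharZero R]
    [Ring A] [Algebra R A] [IsReduced A]
    (htf : ∀ (r : R) (a : A), r • a = 0 → r ≠ 0 → a = 0)
    (D : A →ₗ[R] A) (hD : ∀ x y : A, D (x * y) = D x * y + x * D y)
    (N : ℕ) (hnil : D ^ N = 0) :
    D = 0 := by
  -- descent step
  have step : ∀ n : ℕ, 2 ≤ n → D ^ n = 0 → D ^ (n - 1) = 0 := by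
    intro n hn2 hn
    have hzero : ∀ k : ℕ, n ≤ k → (D ^ k : A →ₗ[R] A) = 0 := by
      intro k hk
      have : D ^ k = D ^ (k - n) * D ^ n := by
        rw [← pow_add]; congr 1; omega
      rw [this, hn, mul_zero]
    ext x
    set y := (D ^ (n - 1)) x with hy
    have hm : n ≤ 2 * n - 2 := by omega
    have hsum := leib_aux D hD (2 * n - 2) x x
    rw [show ((D ^ (2 * n - 2)) (x * x)) = 0 by rw [hzero _ hm]; rfl] at hsum
    have hsingle : ∑ k ∈ Finset.range (2 * n - 2 + 1),
        (2 * n - 2).choose k • ((D ^ k) x * (D ^ (2 * n - 2 - k)) x) =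
        (2 * n - 2).choose (n - 1) • (y * y) := by
      rw [Finset.sum_eq_single (n - 1)]
      · have : 2 * n - 2 - (n - 1) = n - 1 := by omega
        rw [this]
      · intro k hk hkne
        rw [Finset.mem_range] at hk
        rcases le_or_gt n k with h | h
        · rw [hzero k h]; simp
        · have : n ≤ 2 * n - 2 - k := by omega
          rw [hzero _ this]; simp
      · intro h
        exfalso; apply h; rw [Finset.mem_range]; omega
    rw [hsingle] at hsum
    have hc : ((2 * n - 2).choose (n - 1) : R) ≠ 0 := by
      rw [Nat.cast_ne_zero]
      exact (Nat.choose_pos (by omega)).ne'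
    have hyy : y * y = 0 := by
      apply htf _ _ _ hc
      rw [Nat.cast_smul_eq_nsmul]
      exact hsum.symm
    have : IsNilpotent y := ⟨2, by rw [sq]; exact hyy⟩
    have hy0 : y = 0 := this.eq_zero
    simpa using hy0
  induction N with
  | zero =>
    ext x
    have : (D ^ 0) x = 0 := by rw [hnil]; rfl
    simp only [pow_zero, Module.End.one_apply] at this
    simp [show x = 0 from this]
  | succ n ih =>
    rcases Nat.lt_or_ge n 1 with h | h
    · interval_cases n
      simpa using hnil
    · have := step (n + 1) (by omega) hnil
      simp only [Nat.add_sub_cancel] at this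
      exact ih this
end

section
/- Let A be a reduced algebra over a commutative ring R whose additive group (A,+) is torsion-free, D an R-derivation of A, r ≥ 1, and a ∈ A such that D^r(a^m) = 0 for all 1 ≤ m ≤ 2^{r-1}. Then D(a) = 0. -/
open Finset

/-- Iterated Leibniz rule for a derivation given as a linear map. -/
private lemma leibniz_iter {R A : Type*} [CommRing R] [Ring A] [Algebra R A]
    (D : A →ₗ[R] A) (hD : ∀ x y : A, D (x * y) = D x * y + x * D y) :
    ∀ (n : ℕ) (x y : A),
      (D ^ n) (x * y) = ∑ i ∈ Finset.range (n + 1),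
        (n.choose i) • ((D ^ i) x * (D ^ (n - i)) y) := by
  intro n
  induction n with
  | zero => simp
  | succ n ih =>
    intro x y
    have h1 : (D ^ (n + 1)) (x * y) = D ((D ^ n) (x * y)) := by
      rw [pow_succ', Module.End.mul_apply]
    have h2 : ∀ i ∈ Finset.range (n + 1),
        D ((n.choose i) • ((D ^ i) x * (D ^ (n - i)) y)) =
        (n.choose i) • ((D ^ (i + 1)) x * (D ^ (n - i)) y)
        + (n.choose i) • ((D ^ i) x * (D ^ (n - i + 1)) y) := by
      intro i _
      rw [map_nsmul, hD, smul_add]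
      congr 2
      · rw [pow_succ', Module.End.mul_apply]
      · rw [pow_succ', Module.End.mul_apply]
    rw [h1, ih, map_sum, Finset.sum_congr rfl h2, Finset.sum_add_distrib]
    rw [Finset.sum_range_succ'
      (fun i => ((n + 1).choose i) • ((D ^ i) x * (D ^ (n + 1 - i)) y)) (n + 1)]
    simp only [Nat.succ_sub_succ, Nat.choose_succ_succ, add_nsmul, Nat.choose_zero_right,
      Nat.sub_zero, one_smul, pow_zero, Module.End.one_apply]
    rw [Finset.sum_add_distrib, add_assoc]
    congr 1
    -- remains : S2 = ΣB + (x * D^{n+1} y)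
    rw [Finset.sum_range_succ
      (fun i => (n.choose (i + 1)) • ((D ^ (i + 1)) x * (D ^ (n - i)) y)) n,
      Nat.choose_succ_self, zero_smul, add_zero]
    rw [Finset.sum_range_succ'
      (fun i => (n.choose i) • ((D ^ i) x * (D ^ (n - i + 1)) y)) n]
    simp only [Nat.choose_zero_right, one_smul, pow_zero, Module.End.one_apply, Nat.sub_zero]
    congr 1
    apply Finset.sum_congr rfl
    intro i hi
    simp only [Finset.mem_range] at hi
    have : n - (i + 1) + 1 = n - i := by omega
    rw [this]

/-- Let `A` be a reduced `R`-algebra (not necessarily commutative) whose additive group is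
torsion-free, `D` an `R`-derivation, `r ≥ 1` and `a ∈ A` with `D^r(a^m) = 0` for all
`1 ≤ m ≤ 2^{r-1}`. Then `D a = 0`. -/
theorem stmt13 {R A : Type*} [CommRing R] [Ring A] [Algebra R A] [IsReduced A]
    (htf : ∀ (n : ℕ) (a : A), n ≠ 0 → n • a = 0 → a = 0)
    (D : A →ₗ[R] A) (hD : ∀ x y : A, D (x * y) = D x * y + x * D y)
    (r : ℕ) (hr : 1 ≤ r) (a : A)
    (h : ∀ m : ℕ, 1 ≤ m → m ≤ 2 ^ (r - 1) → (D ^ r) (a ^ m) = 0) :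
    D a = 0 := by
  -- vanishing propagates to higher iterates
  have hup : ∀ (k n : ℕ) (x : A), (D ^ k) x = 0 → k ≤ n → (D ^ n) x = 0 := by
    intro k n x hx hkn
    obtain ⟨j, rfl⟩ := Nat.exists_eq_add_of_le hkn
    rw [add_comm, pow_add, Module.End.mul_apply, hx, map_zero]
  -- the downward induction step
  have step : ∀ k : ℕ, 2 ≤ k →
      (∀ m : ℕ, 1 ≤ m → m ≤ 2 ^ (k - 1) → (D ^ k) (a ^ m) = 0) →
      (∀ m : ℕ, 1 ≤ m → m ≤ 2 ^ (k - 2) → (D ^ (k - 1)) (a ^ m) = 0) := by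
    intro k hk ihk m hm1 hm2
    have hpow : 2 ^ (k - 2) + 2 ^ (k - 2) = 2 ^ (k - 1) := by
      have h' : k - 1 = (k - 2) + 1 := by omega
      rw [h', pow_succ]; ring
    have hle : 2 ^ (k - 2) ≤ 2 ^ (k - 1) := Nat.pow_le_pow_right (by norm_num) (by omega)
    have hx : (D ^ k) (a ^ m) = 0 := ihk m hm1 (le_trans hm2 hle)
    have hxx : (D ^ k) (a ^ m * a ^ m) = 0 := by
      rw [← pow_add]
      exact ihk (m + m) (by omega) (by omega)
    have hN : (D ^ (2 * (k - 1))) (a ^ m * a ^ m) = 0 :=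
      hup k _ _ hxx (by omega)
    have hLeib := leibniz_iter D hD (2 * (k - 1)) (a ^ m) (a ^ m)
    rw [hN] at hLeib
    have hsum : (0 : A)
        = ((2 * (k - 1)).choose (k - 1)) • ((D ^ (k - 1)) (a ^ m) * (D ^ (k - 1)) (a ^ m)) := by
      rw [hLeib, Finset.sum_eq_single (k - 1)]
      · rw [show 2 * (k - 1) - (k - 1) = k - 1 by omega]
      · intro i hi hne
        simp only [Finset.mem_range] at hi
        rcases Nat.lt_or_ge i k with hik | hik
        · have hik2 : (D ^ (2 * (k - 1) - i)) (a ^ m) = 0 := hup k _ _ hx (by omega)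
          rw [hik2, mul_zero, smul_zero]
        · have h0 : (D ^ i) (a ^ m) = 0 := hup k i _ hx hik
          rw [h0, zero_mul, smul_zero]
      · intro hmem
        exact absurd (Finset.mem_range.mpr (by omega)) hmem
    have hchoose : (2 * (k - 1)).choose (k - 1) ≠ 0 :=
      Nat.ne_of_gt (Nat.choose_pos (by omega))
    have hz : (D ^ (k - 1)) (a ^ m) * (D ^ (k - 1)) (a ^ m) = 0 :=
      htf _ _ hchoose hsum.symm
    have hnil : IsNilpotent ((D ^ (k - 1)) (a ^ m)) := ⟨2, by rw [pow_two]; exact hz⟩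
    exact IsReduced.eq_zero _ hnil
  -- downward induction from r to 1
  have key : ∀ t : ℕ, t ≤ r - 1 →
      ∀ m : ℕ, 1 ≤ m → m ≤ 2 ^ (r - 1 - t) → (D ^ (r - t)) (a ^ m) = 0 := by
    intro t
    induction t with
    | zero => intro _ m hm1 hm2; exact h m hm1 (by simpa using hm2)
    | succ t iht =>
      intro ht m hm1 hm2
      have h1 : r - (t + 1) = (r - t) - 1 := by omega
      have h2 : r - 1 - (t + 1) = (r - t) - 2 := by omega
      rw [h1]
      have h3 : r - 1 - t = r - t - 1 := by omega
      have h4 : r - 1 - (t + 1) = r - t - 2 := by omega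
      exact step (r - t) (by omega) (fun m' hm1' hm2' => iht (by omega) m' hm1'
        (by rwa [h3])) m hm1 (by rwa [h4] at hm2)
  have hfin := key (r - 1) le_rfl 1 le_rfl (by simp)
  have h1 : r - (r - 1) = 1 := by omega
  rw [h1] at hfin
  simpa using hfin
end

section
/- Let A be a reduced algebra over a commutative ring R with torsion-free additive group, and D an R-derivation of A. Then for every r ≥ 1, the radical of Ker(D^r) equals the radical of Ker(D), where the radical of V is the set of u ∈ A with u^m ∈ V for all sufficiently large m. -/
section aux

variable {R A : Type*} [CommRing R] [Ring A] [Algebra R A]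

lemma aux_leibniz (D : A →ₗ[R] A) (hD : ∀ x y : A, D (x * y) = D x * y + x * D y)
    (n : ℕ) (x y : A) :
    (D ^ n) (x * y) =
      ∑ k ∈ Finset.range (n + 1), n.choose k • ((D ^ k) x * (D ^ (n - k)) y) := by
  induction n with
  | zero => simp
  | succ n ih =>
      have hstep : (D ^ (n + 1)) (x * y) = D ((D ^ n) (x * y)) := by
        rw [pow_succ']; rfl
      rw [hstep, ih, map_sum]
      have hterm : ∀ k ∈ Finset.range (n + 1),
          D (n.choose k • ((D ^ k) x * (D ^ (n - k)) y)) =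
            n.choose k • ((D ^ (k + 1)) x * (D ^ (n + 1 - (k + 1))) y)
              + n.choose k • ((D ^ k) x * (D ^ (n + 1 - k)) y) := by
        intro k hk
        rw [Finset.mem_range] at hk
        have hk' : k ≤ n := Nat.lt_succ_iff.mp hk
        rw [map_nsmul, hD, smul_add]
        congr 2
        · rw [Nat.succ_sub_succ, pow_succ']
          rfl
        · have : n + 1 - k = (n - k) + 1 := by omega
          rw [this, pow_succ']
          rfl
      rw [Finset.sum_congr rfl hterm, Finset.sum_add_distrib]
      -- target sum
      rw [Finset.sum_range_succ' (fun k => (n + 1).choose k • ((D ^ k) x * (D ^ (n + 1 - k)) y))]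
      have h1 : ∀ k ∈ Finset.range (n + 1),
          (n + 1).choose (k + 1) • ((D ^ (k + 1)) x * (D ^ (n + 1 - (k + 1))) y)
            = n.choose k • ((D ^ (k + 1)) x * (D ^ (n + 1 - (k + 1))) y)
              + n.choose (k + 1) • ((D ^ (k + 1)) x * (D ^ (n + 1 - (k + 1))) y) := by
        intro k _
        rw [Nat.choose_succ_succ, add_smul]
      rw [Finset.sum_congr rfl h1, Finset.sum_add_distrib]
      have h2 : (∑ k ∈ Finset.range (n + 1),
            n.choose (k + 1) • ((D ^ (k + 1)) x * (D ^ (n + 1 - (k + 1))) y))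
          + (n + 1).choose 0 • ((D ^ 0) x * (D ^ (n + 1 - 0)) y)
          = ∑ k ∈ Finset.range (n + 1), n.choose k • ((D ^ k) x * (D ^ (n + 1 - k)) y) := by
        rw [Finset.sum_range_succ' (fun k => n.choose k • ((D ^ k) x * (D ^ (n + 1 - k)) y)),
          Finset.sum_range_succ]
        simp [Nat.choose_succ_self]
      rw [add_assoc, h2]

end aux

/-- Let `A` be a reduced `R`-algebra (not necessarily commutative) with torsion-free additive
group and `D` an `R`-derivation of `A`. Then for every `r ≥ 1`, the radical of `Ker D^r`
equals the radical of `Ker D`. -/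
theorem stmt14 {R A : Type*} [CommRing R] [Ring A] [Algebra R A] [IsReduced A]
    (htf : ∀ (n : ℕ) (a : A), n ≠ 0 → n • a = 0 → a = 0)
    (D : A →ₗ[R] A) (hD : ∀ x y : A, D (x * y) = D x * y + x * D y)
    (r : ℕ) (hr : 1 ≤ r) :
    {u : A | ∃ N : ℕ, ∀ m ≥ N, (D ^ r) (u ^ m) = 0} =
      {u : A | ∃ N : ℕ, ∀ m ≥ N, D (u ^ m) = 0} := by
  -- step-down lemma
  have step : ∀ (s N : ℕ) (u : A), 1 ≤ s → (∀ m ≥ N, (D ^ (s + 1)) (u ^ m) = 0) →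
      ∀ m ≥ N, (D ^ s) (u ^ m) = 0 := by
    intro s N u hs h m hm
    have hhigh : ∀ j, s + 1 ≤ j → ∀ m' ≥ N, (D ^ j) (u ^ m') = 0 := by
      intro j hj m' hm'
      have : D ^ j = D ^ (j - (s + 1)) * D ^ (s + 1) := by
        rw [← pow_add]; congr 1; omega
      rw [this, Module.End.mul_apply, h m' hm', map_zero]
    have key : (D ^ (2 * s)) (u ^ (2 * m)) = 0 :=
      hhigh (2 * s) (by omega) (2 * m) (by omega)
    have hsplit : u ^ (2 * m) = u ^ m * u ^ m := by rw [two_mul, pow_add]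
    rw [hsplit, aux_leibniz D hD] at key
    have hsingle : ∑ k ∈ Finset.range (2 * s + 1),
        (2 * s).choose k • ((D ^ k) (u ^ m) * (D ^ (2 * s - k)) (u ^ m))
        = (2 * s).choose s • ((D ^ s) (u ^ m) * (D ^ s) (u ^ m)) := by
      rw [Finset.sum_eq_single s]
      · have h0 : 2 * s - s = s := by omega
        rw [h0]
      · intro k hk hks
        rw [Finset.mem_range] at hk
        rcases lt_or_gt_of_ne hks with h1 | h1
        · rw [hhigh (2 * s - k) (by omega) m hm, mul_zero, smul_zero]
        · rw [hhigh k (by omega) m hm, zero_mul, smul_zero]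
      · intro hs'; exact absurd (Finset.mem_range.mpr (by omega)) hs'
    rw [hsingle] at key
    have hc : (2 * s).choose s ≠ 0 := (Nat.choose_pos (by omega)).ne'
    have hsq : (D ^ s) (u ^ m) * (D ^ s) (u ^ m) = 0 := htf _ _ hc key
    exact IsReduced.eq_zero _ ⟨2, by rw [sq]; exact hsq⟩
  -- descend from any s to 1
  have descend : ∀ (s : ℕ), 1 ≤ s → ∀ (N : ℕ) (u : A),
      (∀ m ≥ N, (D ^ s) (u ^ m) = 0) → ∀ m ≥ N, D (u ^ m) = 0 := by
    intro s
    induction s with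
    | zero => intro h; exact absurd h (by omega)
    | succ s ih =>
        intro _ N u h m hm
        rcases Nat.eq_zero_or_pos s with rfl | hs
        · have := h m hm; rwa [pow_one] at this
        · exact ih hs N u (step s N u hs h) m hm
  ext u
  simp only [Set.mem_setOf_eq]
  constructor
  · rintro ⟨N, h⟩
    exact ⟨N, descend r hr N u h⟩
  · rintro ⟨N, h⟩
    refine ⟨N, fun m hm => ?_⟩
    obtain ⟨t, rfl⟩ : ∃ t, r = t + 1 := ⟨r - 1, by omega⟩
    rw [pow_succ, Module.End.mul_apply, h m hm, map_zero]
end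

section
/- Let A be a commutative ring, D a derivation of A, and f ∈ A. Then for every n ≥ 1, the determinant of the n×n matrix whose (i,j) entry is D^{i-1}(f^j) equals (∏_{k=1}^{n-1} k!) · (Df)^{n(n-1)/2} · f^n. -/
section Aux
variable {A : Type*} [CommRing A]

/-- Bell-polynomial-like coefficients: `D^i (f^m) = ∑_k myc i k * m!/(m-k)! * f^(m-k)`. -/
noncomputable def myc (D : Derivation ℤ A A) (f : A) : ℕ → ℕ → A
  | 0, 0 => 1
  | 0, _+1 => 0
  | i+1, 0 => D (myc D f i 0)
  | i+1, k+1 => D (myc D f i (k+1)) + myc D f i k * D f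

lemma myc_eq_zero (D : Derivation ℤ A A) (f : A) :
    ∀ i k, i < k → myc D f i k = 0 := by
  intro i
  induction i with
  | zero => intro k hk; match k, hk with | (m+1), _ => rfl
  | succ i ih =>
    intro k hk
    match k, hk with
    | (k+1), hk =>
      show D (myc D f i (k+1)) + myc D f i k * D f = 0
      rw [ih (k+1) (by omega), ih k (by omega), map_zero, zero_mul, add_zero]

lemma myc_diag (D : Derivation ℤ A A) (f : A) :
    ∀ i, myc D f i i = (D f) ^ i := by
  intro i
  induction i with
  | zero => simp [myc]
  | succ i ih =>
    show D (myc D f i (i+1)) + myc D f i i * D f = _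
    rw [myc_eq_zero D f i (i+1) (by omega), map_zero, zero_add, ih, pow_succ]

lemma iter_pow (D : Derivation ℤ A A) (f : A) (i m : ℕ) :
    (⇑D)^[i] (f ^ m) =
      ∑ k ∈ Finset.range (i+1), myc D f i k * (Nat.descFactorial m k : A) * f ^ (m - k) := by
  induction i with
  | zero =>
    simp [myc]
  | succ i ih =>
    rw [Function.iterate_succ_apply', ih, map_sum]
    have hterm : ∀ k, D (myc D f i k * (Nat.descFactorial m k : A) * f ^ (m - k)) =
        D (myc D f i k) * (Nat.descFactorial m k : A) * f ^ (m - k) +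
          myc D f i k * (Nat.descFactorial m (k+1) : A) * f ^ (m - (k+1)) * D f := by
      intro k
      rw [Derivation.leibniz, Derivation.leibniz, Derivation.leibniz_pow]
      have hD : D ((Nat.descFactorial m k : A)) = 0 := by
        have : ((Nat.descFactorial m k : A)) = algebraMap ℤ A (Nat.descFactorial m k) := by
          simp
        rw [this, Derivation.map_algebraMap]
      rw [hD]
      have hd : (Nat.descFactorial m (k+1) : A) = (m - k : ℕ) * (Nat.descFactorial m k : A) := by
        rw [Nat.descFactorial_succ]; push_cast; ring
      rw [hd]
      have he : m - (k+1) = m - k - 1 := by omega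
      rw [he]
      simp only [smul_eq_mul, nsmul_eq_mul]
      ring_nf
    rw [Finset.sum_congr rfl fun k _ => hterm k, Finset.sum_add_distrib]
    -- extend the first sum to range (i+2)
    have h1 : ∑ k ∈ Finset.range (i+1),
        D (myc D f i k) * (Nat.descFactorial m k : A) * f ^ (m - k) =
        ∑ k ∈ Finset.range (i+2),
        D (myc D f i k) * (Nat.descFactorial m k : A) * f ^ (m - k) := by
      rw [Finset.sum_range_succ (n := i+1), myc_eq_zero D f i (i+1) (by omega), map_zero,
        zero_mul, zero_mul, add_zero]
    rw [h1, Finset.sum_range_succ' (n := i+1) (f := fun k =>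
        D (myc D f i k) * (Nat.descFactorial m k : A) * f ^ (m - k)),
      Finset.sum_range_succ' (n := i+1) (f := fun k =>
        myc D (f) (i+1) k * (Nat.descFactorial m k : A) * f ^ (m - k))]
    have h0 : myc D f (i+1) 0 = D (myc D f i 0) := rfl
    rw [h0]
    have h2 : ∀ k, myc D f (i+1) (k+1) * (Nat.descFactorial m (k+1) : A) * f ^ (m - (k+1)) =
        D (myc D f i (k+1)) * (Nat.descFactorial m (k+1) : A) * f ^ (m - (k+1)) +
          myc D f i k * (Nat.descFactorial m (k+1) : A) * f ^ (m - (k+1)) * D f := by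
      intro k
      show (D (myc D f i (k+1)) + myc D f i k * D f) * _ * _ = _
      ring
    rw [Finset.sum_congr rfl fun k _ => h2 k, Finset.sum_add_distrib]
    ring
end Aux

/-- Let `A` be a commutative ring, `D` a derivation of `A` and `f ∈ A`. For every `n ≥ 1`,
the determinant of the `n × n` matrix with `(i,j)` entry `D^{i-1}(f^j)` (indices from `1`)
equals `(∏_{k=1}^{n-1} k!) (Df)^{n(n-1)/2} f^n`. -/
theorem stmt15 {A : Type*} [CommRing A] (D : Derivation ℤ A A) (f : A)
    (n : ℕ) (hn : 1 ≤ n) :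
    Matrix.det (Matrix.of fun i j : Fin n => (⇑D)^[(i : ℕ)] (f ^ ((j : ℕ) + 1))) =
      (∏ k ∈ Finset.range n, (Nat.factorial k : A)) *
        (D f) ^ (n * (n - 1) / 2) * f ^ n := by
  classical
  set L : Matrix (Fin n) (Fin n) A := Matrix.of fun i k => myc D f i k with hL
  set T2 : Matrix (Fin n) (Fin n) A := Matrix.of fun k l =>
    (Nat.factorial k : A) *
      ((if (l : ℕ) = (k : ℕ) then f else 0) + (if (l : ℕ) + 1 = (k : ℕ) then 1 else 0)) with hT2
  set W : Matrix (Fin n) (Fin n) A := Matrix.of fun l j =>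
    (Nat.choose (j : ℕ) (l : ℕ) : A) * f ^ ((j : ℕ) - (l : ℕ)) with hW
  set V : Matrix (Fin n) (Fin n) A := Matrix.of fun k j =>
    (Nat.descFactorial ((j : ℕ) + 1) (k : ℕ) : A) * f ^ ((j : ℕ) + 1 - (k : ℕ)) with hV
  -- Step 1: M = L * V
  have hMLV : (Matrix.of fun i j : Fin n => (⇑D)^[(i : ℕ)] (f ^ ((j : ℕ) + 1))) = L * V := by
    ext i j
    rw [Matrix.mul_apply]
    simp only [hL, hV, Matrix.of_apply]
    rw [Fin.sum_univ_eq_sum_range (fun k =>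
      myc D f i k * ((Nat.descFactorial ((j:ℕ)+1) k : A) * f ^ ((j:ℕ)+1-k)))]
    rw [iter_pow D f i ((j:ℕ)+1)]
    rw [Finset.sum_subset (Finset.range_subset_range.2 (by omega : (i:ℕ)+1 ≤ n))]
    · exact Finset.sum_congr rfl fun k _ => by ring
    · intro k _ hk
      rw [myc_eq_zero D f i k (by simp at hk; omega), zero_mul, zero_mul]
  -- Step 2: V = T2 * W
  have hVTW : V = T2 * W := by
    ext k j
    rw [Matrix.mul_apply]
    simp only [hT2, hW, hV, Matrix.of_apply]
    have hsplit : ∀ l : Fin n,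
        (Nat.factorial k : A) * ((if (l:ℕ) = (k:ℕ) then f else 0) + (if (l:ℕ)+1 = (k:ℕ) then 1 else 0)) *
          ((Nat.choose (j:ℕ) (l:ℕ) : A) * f ^ ((j:ℕ) - (l:ℕ)))
        = (Nat.factorial k : A) *
            ((if l = k then f * ((Nat.choose (j:ℕ) (l:ℕ) : A) * f ^ ((j:ℕ) - (l:ℕ))) else 0) +
             (if (l:ℕ)+1 = (k:ℕ) then (Nat.choose (j:ℕ) (l:ℕ) : A) * f ^ ((j:ℕ) - (l:ℕ)) else 0)) := by
      intro l
      by_cases h1 : (l:ℕ)+1 = (k:ℕ)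
      · have h2 : ¬((l:ℕ) = (k:ℕ)) := by omega
        have h3 : ¬(l = k) := fun hh => h2 (by rw [hh])
        rw [if_neg h2, if_neg h3, if_pos h1, if_pos h1]
        ring
      · by_cases h2 : l = k
        · rw [if_pos h2, if_pos (show (l:ℕ)=(k:ℕ) by rw [h2]), if_neg h1, if_neg h1]
          ring
        · rw [if_neg (fun hh => h2 (Fin.ext hh)), if_neg h2, if_neg h1, if_neg h1]
          ring
    rw [Finset.sum_congr rfl fun l _ => hsplit l, ← Finset.mul_sum, Finset.sum_add_distrib,
      Finset.sum_ite_eq' Finset.univ k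
        (fun l => f * ((Nat.choose (j:ℕ) (l:ℕ) : A) * f ^ ((j:ℕ) - (l:ℕ)))),
      if_pos (Finset.mem_univ k)]
    rcases eq_or_ne (k : ℕ) 0 with hk | hk
    · have : ∀ l : Fin n, (if (l:ℕ)+1 = (k:ℕ) then (Nat.choose (j:ℕ) (l:ℕ) : A) * f ^ ((j:ℕ) - (l:ℕ)) else 0) = 0 := by
        intro l; rw [if_neg (by omega)]
      rw [Finset.sum_congr rfl fun l _ => this l, Finset.sum_const_zero, hk]
      simp [pow_succ']
    · obtain ⟨m, hm⟩ := Nat.exists_eq_succ_of_ne_zero hk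
      have hmn : m < n := by omega
      have hsum : ∑ l : Fin n, (if (l:ℕ)+1 = (k:ℕ) then (Nat.choose (j:ℕ) (l:ℕ) : A) * f ^ ((j:ℕ) - (l:ℕ)) else 0)
          = (Nat.choose (j:ℕ) m : A) * f ^ ((j:ℕ) - m) := by
        rw [Finset.sum_eq_single (⟨m, hmn⟩ : Fin n)]
        · rw [if_pos (by simp [hm])]
        · intro l _ hl
          rw [if_neg]
          intro h
          have hlm : (l:ℕ) = m := by omega
          exact hl (Fin.ext (by simp [hlm]))
        · intro h; exact absurd (Finset.mem_univ _) h
      rw [hsum, hm]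
      rw [Nat.descFactorial_eq_factorial_mul_choose]
      rcases Nat.lt_or_ge (m+1) ((j:ℕ)+1) with hle | hgt
      · have h1 : (j:ℕ)+1-(m+1) = ((j:ℕ)-(m+1)) + 1 := by omega
        have h2 : (j:ℕ) - m = ((j:ℕ)-(m+1)) + 1 := by omega
        rw [h1, h2, Nat.choose_succ_succ (j:ℕ) m]
        push_cast
        ring
      · have hc1 : Nat.choose (j:ℕ) (m+1) = 0 := Nat.choose_eq_zero_of_lt (by omega)
        rcases Nat.eq_or_lt_of_le hgt with heq | hlt
        · have h2 : (j:ℕ) = m := by omega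
          rw [h2]
          simp [Nat.choose_succ_succ, hc1]
        · have hc2 : Nat.choose (j:ℕ) m = 0 := Nat.choose_eq_zero_of_lt (by omega)
          have hc3 : Nat.choose ((j:ℕ)+1) (m+1) = 0 := Nat.choose_eq_zero_of_lt (by omega)
          simp [hc1, hc2, hc3]
  -- determinants
  have hdetL : L.det = (D f) ^ (n * (n - 1) / 2) := by
    rw [Matrix.det_of_lowerTriangular L (by
      intro i j hij
      exact myc_eq_zero D f i j hij)]
    have : ∀ i : Fin n, L i i = (D f) ^ (i : ℕ) := fun i => myc_diag D f i
    rw [Finset.prod_congr rfl fun i _ => this i]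
    rw [Finset.prod_pow_eq_pow_sum]
    congr 1
    rw [Fin.sum_univ_eq_sum_range (fun i => i), Finset.sum_range_id]
  have hdetT2 : T2.det = (∏ k ∈ Finset.range n, (Nat.factorial k : A)) * f ^ n := by
    rw [Matrix.det_of_lowerTriangular T2 (by
      intro i j hij
      have hij' : (i:ℕ) < (j:ℕ) := hij
      simp only [hT2, Matrix.of_apply]
      rw [if_neg (by omega), if_neg (by omega), add_zero, mul_zero])]
    have : ∀ k : Fin n, T2 k k = (Nat.factorial k : A) * f := by
      intro k
      simp only [hT2, Matrix.of_apply]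
      rw [if_neg (by omega : ¬((k:ℕ)+1 = (k:ℕ)))]
      simp
    rw [Finset.prod_congr rfl fun k _ => this k, Finset.prod_mul_distrib,
      Finset.prod_const, Finset.card_univ, Fintype.card_fin,
      Fin.prod_univ_eq_prod_range (fun k => (Nat.factorial k : A))]
  have hdetW : W.det = 1 := by
    rw [Matrix.det_of_upperTriangular (M := W) (by
      intro i j hij
      have hij' : (j:ℕ) < (i:ℕ) := hij
      simp only [hW, Matrix.of_apply]
      rw [Nat.choose_eq_zero_of_lt hij']
      simp)]
    have : ∀ j : Fin n, W j j = 1 := by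
      intro j
      simp only [hW, Matrix.of_apply]
      simp
    rw [Finset.prod_congr rfl fun j _ => this j, Finset.prod_const_one]
  rw [hMLV, hVTW, Matrix.det_mul, Matrix.det_mul, hdetL, hdetT2, hdetW]
  ring
end

section
/- Let A be a commutative ring, D a derivation of A, f ∈ A, and k ≥ 2. Then there exist elements α_{k,1},…,α_{k,k-1} ∈ A such that for each 0 ≤ i ≤ k-1: D^i(f^k) - Σ_{j=1}^{k-1} α_{k,j} f^{k-j} D^i(f^j) equals (k-1)!·(Df)^{k-1}·f if i = k-1, and 0 otherwise. -/
private lemma keyS {A : Type*} [CommRing A] (D : Derivation ℤ A A) (f : A) :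
    ∀ i k : ℕ, 1 ≤ k → i ≤ k - 1 →
    ∑ j ∈ Finset.Icc 1 k, ((-1:ℤ)^(k-j) * ((k-1).choose (j-1) : ℤ)) •
        (f^(k-j) * (⇑D)^[i] (f^j)) =
      if i = k - 1 then (Nat.factorial (k - 1) : A) * (D f) ^ (k - 1) * f else 0 := by
  intro i
  induction i with
  | zero =>
    intro k hk hik
    simp only [Function.iterate_zero, id_eq]
    have hterm : ∀ j ∈ Finset.Icc 1 k,
        ((-1:ℤ)^(k-j) * ((k-1).choose (j-1) : ℤ)) • (f^(k-j) * f^j)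
          = ((-1:ℤ)^(k-j) * ((k-1).choose (j-1) : ℤ)) • f^k := by
      intro j hj
      rw [Finset.mem_Icc] at hj
      rw [← pow_add, Nat.sub_add_cancel hj.2]
    rw [Finset.sum_congr rfl hterm, ← Finset.sum_smul]
    have hreind : ∑ j ∈ Finset.Icc 1 k, ((-1:ℤ)^(k-j) * ((k-1).choose (j-1) : ℤ))
        = ∑ m ∈ Finset.range k, ((-1:ℤ)^(k-1-m) * ((k-1).choose m : ℤ)) := by
      rw [show Finset.Icc 1 k = Finset.Ico 1 (k+1) by rw [Finset.Ico_add_one_right_eq_Icc],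
        Finset.sum_Ico_eq_sum_range]
      simp only [Nat.add_sub_cancel]
      refine Finset.sum_congr rfl fun m hm => ?_
      have h1 : 1 + m - 1 = m := by omega
      have h2 : k - (1 + m) = k - 1 - m := by omega
      rw [h1, h2]
    rw [hreind]
    have halt : ∑ m ∈ Finset.range k, ((-1:ℤ)^(k-1-m) * ((k-1).choose m : ℤ))
        = if k - 1 = 0 then 1 else 0 := by
      have h := Int.alternating_sum_range_choose (n := k - 1)
      rw [Nat.sub_add_cancel hk] at h
      calc ∑ m ∈ Finset.range k, ((-1:ℤ)^(k-1-m) * ((k-1).choose m : ℤ))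
          = (-1:ℤ)^(k-1) * ∑ m ∈ Finset.range k, ((-1:ℤ)^m * ((k-1).choose m : ℤ)) := by
            rw [Finset.mul_sum]
            refine Finset.sum_congr rfl fun m hm => ?_
            rw [Finset.mem_range] at hm
            have hmk : m ≤ k - 1 := by omega
            have hsq : (-1:ℤ)^m * (-1:ℤ)^m = 1 := by
              rw [← pow_add]; exact Even.neg_one_pow ⟨m, rfl⟩
            have h1 : (-1:ℤ)^(k-1-m) * (-1:ℤ)^m = (-1:ℤ)^(k-1) := by
              rw [← pow_add, Nat.sub_add_cancel hmk]
            calc (-1:ℤ)^(k-1-m) * ((k-1).choose m : ℤ)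
                = ((-1:ℤ)^(k-1-m) * (-1:ℤ)^m) * ((-1:ℤ)^m * ((k-1).choose m : ℤ)) := by
                  rw [show ((-1:ℤ)^(k-1-m) * (-1:ℤ)^m) * ((-1:ℤ)^m * ((k-1).choose m : ℤ))
                      = ((-1:ℤ)^m * (-1:ℤ)^m) * ((-1:ℤ)^(k-1-m) * ((k-1).choose m : ℤ)) from by
                    ring, hsq, one_mul]
              _ = (-1:ℤ)^(k-1) * ((-1:ℤ)^m * ((k-1).choose m : ℤ)) := by rw [h1]
        _ = (-1:ℤ)^(k-1) * (if k - 1 = 0 then 1 else 0) := by rw [h]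
        _ = if k - 1 = 0 then 1 else 0 := by
            by_cases hk1 : k - 1 = 0 <;> simp [hk1]
    rw [halt]
    by_cases hk1 : k = 1
    · subst hk1; simp
    · have : ¬ (k - 1 = 0) := by omega
      have h0 : ¬ ((0:ℕ) = k - 1) := by omega
      simp [this, h0]
  | succ i ih =>
    intro k hk hik
    obtain ⟨n, rfl⟩ : ∃ n, k = n + 2 := ⟨k - 2, by omega⟩
    have hn1 : n + 2 - 1 = n + 1 := rfl
    simp only [hn1]
    -- notation
    set z : ℕ → ℤ := fun j => (-1:ℤ)^(n+2-j) * ((n+1).choose (j-1) : ℤ) with hz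
    have hpow : ∀ m : ℕ, D (f ^ m) = ((m:ℤ)) • (f^(m-1) * D f) := by
      intro m
      rw [Derivation.leibniz_pow, smul_eq_mul, natCast_zsmul]
    -- term-by-term derivative identity
    have main : ∀ j ∈ Finset.Icc 1 (n+2),
        z j • (f^(n+2-j) * (⇑D)^[i+1] (f^j))
          = D (z j • (f^(n+2-j) * (⇑D)^[i] (f^j)))
            - z j • (((n+2-j : ℕ):ℤ) • ((⇑D)^[i] (f^j) * (f^(n+2-j-1) * D f))) := by
      intro j hj
      rw [Derivation.map_smul, Derivation.leibniz, smul_eq_mul, smul_eq_mul,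
        ← Function.iterate_succ_apply' D, hpow (n+2-j)]
      rw [mul_smul_comm, mul_comm ((⇑D)^[i] (f^j)) (f^(n+2-j-1) * D f)]
      rw [mul_comm (f^(n+2-j-1) * D f) ((⇑D)^[i] (f^j))]
      rw [smul_add, add_sub_cancel_right]
    rw [Finset.sum_congr rfl main, Finset.sum_sub_distrib, ← map_sum]
    -- first sum is S i (n+2) = 0 by ih
    have hT : ∑ j ∈ Finset.Icc 1 (n+2), z j • (f^(n+2-j) * (⇑D)^[i] (f^j)) = 0 := by
      have h := ih (n+2) (by omega) (by omega)
      simp only [hn1] at h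
      simp only [hz]
      rw [h, if_neg (by omega)]
    rw [hT, map_zero, zero_sub]
    -- second sum: drop the j = n+2 term, reindex, apply ih at n+1
    have htop : ∑ j ∈ Finset.Icc 1 (n+2),
        z j • (((n+2-j : ℕ):ℤ) • ((⇑D)^[i] (f^j) * (f^(n+2-j-1) * D f)))
        = ∑ j ∈ Finset.Icc 1 (n+1),
        z j • (((n+2-j : ℕ):ℤ) • ((⇑D)^[i] (f^j) * (f^(n+2-j-1) * D f))) := by
      rw [show n + 2 = (n+1) + 1 from rfl,
        Finset.sum_Icc_succ_top (by omega)]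
      simp
    rw [htop]
    have hterm2 : ∀ j ∈ Finset.Icc 1 (n+1),
        z j • (((n+2-j : ℕ):ℤ) • ((⇑D)^[i] (f^j) * (f^(n+2-j-1) * D f)))
        = (-((n:ℤ)+1)) • ((((-1:ℤ)^(n+1-j) * ((n).choose (j-1) : ℤ)) •
            (f^(n+1-j) * (⇑D)^[i] (f^j))) * D f) := by
      intro j hj
      rw [Finset.mem_Icc] at hj
      obtain ⟨hj1, hj2⟩ := hj
      rw [smul_smul, smul_mul_assoc, smul_smul]
      have e1 : n + 2 - j - 1 = n + 1 - j := by omega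
      have e2 : z j * ((n+2-j : ℕ):ℤ) = (-((n:ℤ)+1)) * ((-1:ℤ)^(n+1-j) * ((n).choose (j-1) : ℤ)) := by
        simp only [hz]
        have hc : ((n+2-j : ℕ):ℤ) * ((n+1).choose (j-1) : ℤ)
            = ((n:ℤ)+1) * ((n).choose (j-1) : ℤ) := by
          have h' := Nat.choose_mul_succ_eq n (j-1)
          have : (n+2-j) * ((n+1).choose (j-1)) = (n+1) * ((n).choose (j-1)) := by
            have e : n + 2 - j = n + 1 - (j-1) := by omega
            rw [e, mul_comm, ← h', mul_comm]
          exact_mod_cast congrArg (Nat.cast : ℕ → ℤ) this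
        have hs : (-1:ℤ)^(n+2-j) = -(-1:ℤ)^(n+1-j) := by
          have : n + 2 - j = (n+1-j) + 1 := by omega
          rw [this, pow_succ]; ring
        rw [hs]
        linear_combination (-(-1:ℤ)^(n+1-j)) * hc
      rw [e1, e2]
      congr 1
      ring
    have h2 := ih (n+1) (by omega) (by omega)
    simp only [Nat.add_sub_cancel] at h2
    rw [Finset.sum_congr rfl hterm2, ← Finset.smul_sum, ← Finset.sum_mul, h2]
    by_cases hin : i = n
    · rw [if_pos hin, if_pos (by omega)]
      have hfact : ((n+1).factorial : A) = ((n:A)+1) * (n.factorial : A) := by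
        rw [Nat.factorial_succ]; push_cast; ring
      rw [hfact]
      rw [neg_smul, neg_neg, zsmul_eq_mul]
      push_cast
      ring
    · rw [if_neg (by omega), if_neg (by omega)]
      simp

/-- Let `A` be a commutative ring, `D` a derivation of `A`, `f ∈ A` and `k ≥ 2`. Then there
exist `α_{k,1},…,α_{k,k-1} ∈ A` such that for each `0 ≤ i ≤ k-1`:
`D^i(f^k) - ∑_{j=1}^{k-1} α_{k,j} f^{k-j} D^i(f^j)` equals `(k-1)! (Df)^{k-1} f` if
`i = k-1` and `0` otherwise. -/
theorem stmt16 {A : Type*} [CommRing A] (D : Derivation ℤ A A) (f : A)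
    (k : ℕ) (hk : 2 ≤ k) :
    ∃ α : ℕ → A, ∀ i : ℕ, i ≤ k - 1 →
      (⇑D)^[i] (f ^ k) - ∑ j ∈ Finset.Icc 1 (k - 1), α j * f ^ (k - j) * (⇑D)^[i] (f ^ j) =
        if i = k - 1 then (Nat.factorial (k - 1) : A) * (D f) ^ (k - 1) * f else 0 := by
  refine ⟨fun j => ((-((-1:ℤ)^(k-j) * ((k-1).choose (j-1) : ℤ)) : ℤ) : A), fun i hi => ?_⟩
  have key := keyS D f i k (by omega) hi
  have hsplit : ∑ j ∈ Finset.Icc 1 k, ((-1:ℤ)^(k-j) * ((k-1).choose (j-1) : ℤ)) •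
      (f^(k-j) * (⇑D)^[i] (f^j))
      = (∑ j ∈ Finset.Icc 1 (k-1), ((-1:ℤ)^(k-j) * ((k-1).choose (j-1) : ℤ)) •
          (f^(k-j) * (⇑D)^[i] (f^j))) + (⇑D)^[i] (f^k) := by
    obtain ⟨m, rfl⟩ : ∃ m, k = m + 1 := ⟨k - 1, by omega⟩
    rw [Finset.sum_Icc_succ_top (by omega)]
    simp
  rw [hsplit] at key
  rw [← key]
  have : ∀ j ∈ Finset.Icc 1 (k-1),
      ((-((-1:ℤ)^(k-j) * ((k-1).choose (j-1) : ℤ)) : ℤ) : A) * f ^ (k - j) * (⇑D)^[i] (f ^ j)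
      = -(((-1:ℤ)^(k-j) * ((k-1).choose (j-1) : ℤ)) • (f^(k-j) * (⇑D)^[i] (f^j))) := by
    intro j hj
    rw [zsmul_eq_mul]
    push_cast
    ring
  rw [Finset.sum_congr rfl this, Finset.sum_neg_distrib]
  ring
end

section
/- For every n ≥ 1, the determinant of the n×n matrix whose (i,j) entry is (i+j-2)! equals (∏_{k=1}^{n-1} k!)². -/
open Finset

lemma sum_choose_mul_choose (i j n : ℕ) (hi : i < n) :
    ∑ k ∈ Finset.range n, i.choose k * j.choose k = (i + j).choose i := by
  rw [Nat.add_choose_eq, Finset.Nat.sum_antidiagonal_eq_sum_range_succ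
    (f := fun a b => i.choose a * j.choose b)]
  conv_rhs => rw [← Finset.sum_range_reflect]
  have h1 : ∀ k ∈ Finset.range (i + 1),
      i.choose (i + 1 - 1 - k) * j.choose (i - (i + 1 - 1 - k)) = i.choose k * j.choose k := by
    intro k hk
    rw [Finset.mem_range] at hk
    have hk' : k ≤ i := Nat.lt_succ_iff.mp hk
    simp only [Nat.add_sub_cancel]
    rw [Nat.choose_symm hk', Nat.sub_sub_self hk']
  rw [Finset.sum_congr rfl h1]
  symm
  apply Finset.sum_subset
  · intro k hk; rw [Finset.mem_range] at *; omega
  · intro k _ hk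
    rw [Finset.mem_range, not_lt] at hk
    rw [Nat.choose_eq_zero_of_lt (by omega), zero_mul]

/-- For every `n ≥ 1`, the determinant of the `n × n` matrix whose `(i,j)` entry is
`(i+j-2)!` (indices from `1`) equals `(∏_{k=1}^{n-1} k!)²`. -/
theorem stmt17 (n : ℕ) (hn : 1 ≤ n) :
    Matrix.det (Matrix.of fun i j : Fin n => (Nat.factorial ((i : ℕ) + (j : ℕ)) : ℤ)) =
      (∏ k ∈ Finset.range n, (Nat.factorial k : ℤ)) ^ 2 := by
  set A : Matrix (Fin n) (Fin n) ℤ :=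
    Matrix.of fun i k : Fin n => ((Nat.factorial i * Nat.choose i k : ℕ) : ℤ) with hA
  have hM : (Matrix.of fun i j : Fin n => (Nat.factorial ((i : ℕ) + (j : ℕ)) : ℤ))
      = A * A.transpose := by
    ext i j
    simp only [Matrix.mul_apply, Matrix.transpose_apply, hA, Matrix.of_apply]
    push_cast
    have : ∑ k : Fin n, ((Nat.factorial i : ℤ) * Nat.choose i k) *
        ((Nat.factorial j : ℤ) * Nat.choose j k)
        = (Nat.factorial i : ℤ) * Nat.factorial j *
          ∑ k ∈ Finset.range n, ((Nat.choose i k : ℤ) * Nat.choose j k) := by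
      rw [Finset.mul_sum, ← Fin.sum_univ_eq_sum_range]
      congr 1; ext k; ring
    rw [this]
    have hsum : ∑ k ∈ Finset.range n, ((Nat.choose i k : ℤ) * Nat.choose j k)
        = ((i + j : ℕ).choose i : ℤ) := by
      push_cast [← sum_choose_mul_choose (i : ℕ) (j : ℕ) n i.isLt]
      rfl
    rw [hsum]
    have := Nat.choose_mul_factorial_mul_factorial (Nat.le_add_right (i : ℕ) (j : ℕ))
    rw [Nat.add_sub_cancel_left] at this
    push_cast [← this]
    ring
  rw [hM, Matrix.det_mul, Matrix.det_transpose, ← sq]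
  congr 1
  have hdet : A.det = ∏ i : Fin n, A i i := by
    apply Matrix.det_of_lowerTriangular
    intro i j hij
    simp only [hA, Matrix.of_apply]
    have h2 : (i : ℕ) < (j : ℕ) := hij
    rw [Nat.choose_eq_zero_of_lt h2, mul_zero, Nat.cast_zero]
  rw [hdet, ← Fin.prod_univ_eq_prod_range (fun k => (Nat.factorial k : ℤ))]
  congr 1; ext i
  simp [hA, Nat.choose_self]
end

section
/- Let A be a commutative ring, D a derivation of A, P(ξ) = Σ_{i=0}^d cᵢξ^i ∈ A[ξ] a nonzero polynomial, and f ∈ A with P(D)(f^m) = 0 for all 1 ≤ m ≤ d+1. Then for each 0 ≤ i ≤ d: (∏_{k=1}^d k!)·cᵢ·(Df)^{d(d+1)/2}·f^{d+1} = 0. -/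
open Finset

private def Bpoly {A : Type*} [CommRing A] (D : Derivation ℤ A A) (f : A) : ℕ → ℕ → A
  | 0, k => if k = 0 then 1 else 0
  | j+1, 0 => D (Bpoly D f j 0)
  | j+1, k+1 => D (Bpoly D f j (k+1)) + D f * Bpoly D f j k

private lemma Bpoly_eq_zero {A : Type*} [CommRing A] (D : Derivation ℤ A A) (f : A) :
    ∀ j k, j < k → Bpoly D f j k = 0 := by
  intro j
  induction j with
  | zero => intro k hk; simp [Bpoly]; omega
  | succ j ih =>
    intro k hk
    match k, hk with
    | k+1, hk =>
      rw [Bpoly, ih (k+1) (by omega), ih k (by omega), map_zero, mul_zero, add_zero]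

private lemma Bpoly_diag {A : Type*} [CommRing A] (D : Derivation ℤ A A) (f : A) :
    ∀ j, Bpoly D f j j = (D f) ^ j := by
  intro j
  induction j with
  | zero => simp [Bpoly]
  | succ j ih =>
    rw [Bpoly, Bpoly_eq_zero D f j (j+1) (by omega), map_zero, zero_add, ih, pow_succ]
    ring

private lemma key {A : Type*} [CommRing A] (D : Derivation ℤ A A) (f : A) :
    ∀ (j m : ℕ), (⇑D)^[j] (f ^ m) =
      ∑ k ∈ range (j+1), (m.descFactorial k : A) * f ^ (m - k) * Bpoly D f j k := by
  intro j
  induction j with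
  | zero => intro m; simp [Bpoly]
  | succ j ih =>
    intro m
    rw [Function.iterate_succ_apply', ih m, map_sum]
    have step : ∀ k ∈ range (j+1),
        D ((m.descFactorial k : A) * f ^ (m - k) * Bpoly D f j k) =
          (m.descFactorial k : A) * f ^ (m - k) * D (Bpoly D f j k)
          + (m.descFactorial (k+1) : A) * f ^ (m - (k+1)) * (D f * Bpoly D f j k) := by
      intro k _
      simp only [D.leibniz, D.leibniz_pow, D.map_natCast, smul_eq_mul, smul_zero, mul_zero,
        add_zero, nsmul_eq_mul, Nat.descFactorial_succ, Nat.cast_mul]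
      have : m - (k+1) = m - k - 1 := by omega
      rw [this]
      ring
    rw [Finset.sum_congr rfl step, Finset.sum_add_distrib]
    -- RHS manipulation
    rw [Finset.sum_range_succ' (fun k => (m.descFactorial k : A) * f ^ (m - k) * Bpoly D f (j+1) k) (j+1)]
    have hB0 : Bpoly D f (j+1) 0 = D (Bpoly D f j 0) := rfl
    have hBs : ∀ k, Bpoly D f (j+1) (k+1) = D (Bpoly D f j (k+1)) + D f * Bpoly D f j k := fun k => rfl
    simp only [hBs, hB0, mul_add]
    rw [Finset.sum_add_distrib]
    have e1 : ∑ k ∈ range (j+1), (m.descFactorial (k+1) : A) * f ^ (m - (k+1)) * D (Bpoly D f j (k+1))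
        + (m.descFactorial 0 : A) * f ^ (m - 0) * D (Bpoly D f j 0)
        = ∑ k ∈ range (j+1), (m.descFactorial k : A) * f ^ (m - k) * D (Bpoly D f j k) := by
      rw [← Finset.sum_range_succ' (fun k => (m.descFactorial k : A) * f ^ (m - k) * D (Bpoly D f j k)) (j+1)]
      rw [Finset.sum_range_succ]
      rw [Bpoly_eq_zero D f j (j+1) (by omega), map_zero, mul_zero, add_zero]
    linear_combination -e1

/-- Let `A` be a commutative ring, `D` a derivation of `A`, `P(ξ) = ∑_{i=0}^d cᵢ ξ^i` a
nonzero polynomial over `A`, and `f ∈ A` with `P(D)(f^m) = 0` for all `1 ≤ m ≤ d+1`. Then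
for each `0 ≤ i ≤ d`: `(∏_{k=1}^d k!) cᵢ (Df)^{d(d+1)/2} f^{d+1} = 0`. -/
theorem stmt18 {A : Type*} [CommRing A] (D : Derivation ℤ A A)
    (d : ℕ) (c : ℕ → A) (hc : ∃ i ≤ d, c i ≠ 0) (f : A)
    (h : ∀ m : ℕ, 1 ≤ m → m ≤ d + 1 →
      ∑ i ∈ Finset.range (d + 1), c i * (⇑D)^[i] (f ^ m) = 0) :
    ∀ i ≤ d,
      (∏ k ∈ Finset.range (d + 1), (Nat.factorial k : A)) *
        c i * (D f) ^ (d * (d + 1) / 2) * f ^ (d + 1) = 0 := by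
  classical
  intro i hi
  set n := d + 1 with hn
  set Bm : Matrix (Fin n) (Fin n) A := fun k j => Bpoly D f (j : ℕ) (k : ℕ) with hBm
  set V : Matrix (Fin n) (Fin n) A :=
    fun m k => ((m : ℕ).descFactorial (k : ℕ) : A) * f ^ ((m : ℕ) - (k : ℕ)) with hV
  set T : Matrix (Fin n) (Fin n) A := fun k k' =>
    if (k : ℕ) = (k' : ℕ) then f else if (k : ℕ) + 1 = (k' : ℕ) then ((k' : ℕ) : A) else 0 with hT
  set M : Matrix (Fin n) (Fin n) A := fun m i => (⇑D)^[(i : ℕ)] (f ^ ((m : ℕ) + 1)) with hM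
  set V' : Matrix (Fin n) (Fin n) A :=
    fun m k => (((m : ℕ) + 1).descFactorial (k : ℕ) : A) * f ^ ((m : ℕ) + 1 - (k : ℕ)) with hV'
  -- M = V' * Bm
  have hMV : M = V' * Bm := by
    ext m j
    rw [Matrix.mul_apply]
    simp only [hM, hV', hBm]
    rw [key D f (j : ℕ) ((m : ℕ) + 1),
      Fin.sum_univ_eq_sum_range
        (fun k => (((m : ℕ) + 1).descFactorial k : A) * f ^ ((m : ℕ) + 1 - k) * Bpoly D f (j : ℕ) k) n]
    apply Finset.sum_subset
    · intro x hx
      simp only [Finset.mem_range] at *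
      have := j.isLt
      omega
    · intro x hx hx'
      simp only [Finset.mem_range] at *
      rw [Bpoly_eq_zero D f (j : ℕ) x (by omega), mul_zero]
  -- V' = V * T
  have hV'VT : V' = V * T := by
    ext m k
    rw [Matrix.mul_apply]
    simp only [hV', hV, hT]
    have split : ∀ k' : Fin n,
        ((m : ℕ).descFactorial (k' : ℕ) : A) * f ^ ((m : ℕ) - (k' : ℕ)) *
          (if (k' : ℕ) = (k : ℕ) then f else if (k' : ℕ) + 1 = (k : ℕ) then ((k : ℕ) : A) else 0)
        = (if k' = k then ((m : ℕ).descFactorial (k' : ℕ) : A) * f ^ ((m : ℕ) - (k' : ℕ)) * f else 0)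
          + (if (k' : ℕ) + 1 = (k : ℕ) then
              ((m : ℕ).descFactorial (k' : ℕ) : A) * f ^ ((m : ℕ) - (k' : ℕ)) * ((k : ℕ) : A) else 0) := by
      intro k'
      rcases eq_or_ne k' k with rfl | hne
      · have h3 : ¬((k' : ℕ) + 1 = (k' : ℕ)) := by omega
        simp [h3]
      · have : (k' : ℕ) ≠ (k : ℕ) := fun hh => hne (Fin.ext hh)
        rw [if_neg this, if_neg hne, zero_add]
        split <;> ring
    rw [Finset.sum_congr rfl (fun k' _ => split k'), Finset.sum_add_distrib,
      Finset.sum_ite_eq' Finset.univ k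
        (fun k' => ((m : ℕ).descFactorial (k' : ℕ) : A) * f ^ ((m : ℕ) - (k' : ℕ)) * f),
      if_pos (Finset.mem_univ k)]
    rcases Nat.eq_zero_or_pos (k : ℕ) with hk0 | hkpos
    · have hz : ∀ k' : Fin n, ¬ ((k' : ℕ) + 1 = (k : ℕ)) := fun k' => by omega
      simp only [hz, if_false, Finset.sum_const_zero, add_zero, hk0]
      simp [pow_succ]
    · obtain ⟨k₀, hk₀⟩ : ∃ k₀, (k : ℕ) = k₀ + 1 := ⟨(k : ℕ) - 1, by omega⟩
      have hk₀lt : k₀ < n := by have := k.isLt; omega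
      have hcond : ∀ k' : Fin n, ((k' : ℕ) + 1 = (k : ℕ)) ↔ k' = (⟨k₀, hk₀lt⟩ : Fin n) := by
        intro k'
        rw [Fin.ext_iff]
        simp only [hk₀]
        omega
      rw [Finset.sum_congr rfl (fun k' _ => by rw [if_congr (hcond k') rfl rfl]),
        Finset.sum_ite_eq' Finset.univ (⟨k₀, hk₀lt⟩ : Fin n)
          (fun k' => ((m : ℕ).descFactorial (k' : ℕ) : A) * f ^ ((m : ℕ) - (k' : ℕ)) * ((k : ℕ) : A)),
        if_pos (Finset.mem_univ _)]
      -- now pure descFactorial identity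
      simp only [hk₀]
      rcases lt_trichotomy k₀ (m : ℕ) with hlt | heq | hgt
      · rw [Nat.succ_descFactorial_succ, Nat.descFactorial_succ]
        have e1 : (m : ℕ) + 1 - (k₀ + 1) = (m : ℕ) - k₀ := by omega
        have e2 : (m : ℕ) - (k₀ + 1) = ((m : ℕ) - k₀) - 1 := by omega
        have e3 : ((m : ℕ) - k₀ - 1) + 1 = (m : ℕ) - k₀ := by omega
        rw [e1, e2]
        push_cast [Nat.cast_sub (by omega : k₀ ≤ (m : ℕ))]
        rw [← e3, pow_succ]
        push_cast
        ring
      · subst heq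
        rw [Nat.succ_descFactorial_succ, Nat.descFactorial_self,
          Nat.descFactorial_eq_zero_iff_lt.mpr (by omega)]
        push_cast
        ring
      · rw [Nat.descFactorial_eq_zero_iff_lt.mpr (by omega),
          Nat.descFactorial_eq_zero_iff_lt.mpr (by omega),
          Nat.descFactorial_eq_zero_iff_lt.mpr (by omega)]
        simp
  -- hypothesis as mulVec
  set cv : Fin n → A := fun j => c (j : ℕ) with hcv
  have hMc : M.mulVec cv = 0 := by
    funext m
    simp only [Matrix.mulVec, dotProduct, hM, hcv, Pi.zero_apply]
    rw [Fin.sum_univ_eq_sum_range (fun j => (⇑D)^[j] (f ^ ((m : ℕ) + 1)) * c j) n]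
    rw [Finset.sum_congr rfl (fun j _ => mul_comm ((⇑D)^[j] (f ^ ((m : ℕ) + 1))) (c j))]
    exact h ((m : ℕ) + 1) (by omega) (by have := m.isLt; omega)
  have hdc : M.det • cv = 0 := by
    have h1 := congrArg (M.adjugate.mulVec) hMc
    rwa [Matrix.mulVec_mulVec, Matrix.adjugate_mul, Matrix.mulVec_zero,
      Matrix.smul_mulVec, Matrix.one_mulVec] at h1
  -- determinant computation
  have hdetV : V.det = ∏ k ∈ Finset.range n, (Nat.factorial k : A) := by
    rw [Matrix.det_of_lowerTriangular V (fun a b hab => by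
      simp only [hV]
      rw [Nat.descFactorial_eq_zero_iff_lt.mpr (by exact_mod_cast hab), Nat.cast_zero, zero_mul])]
    rw [← Fin.prod_univ_eq_prod_range (fun k => (Nat.factorial k : A)) n]
    exact Finset.prod_congr rfl fun k _ => by
      simp [hV, Nat.descFactorial_self]
  have hdetT : T.det = f ^ n := by
    rw [Matrix.det_of_upperTriangular (show T.BlockTriangular id from fun a b hab => by
      simp only [hT, id] at *
      rw [if_neg (by omega), if_neg (by omega)])]
    simp [hT]
  have hdetB : Bm.det = (D f) ^ (d * (d + 1) / 2) := by
    rw [Matrix.det_of_upperTriangular (show Bm.BlockTriangular id from fun a b hab => by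
      simp only [hBm, id] at *
      exact Bpoly_eq_zero D f _ _ (by exact_mod_cast hab))]
    have : ∀ k : Fin n, Bm k k = (D f) ^ (k : ℕ) := fun k => Bpoly_diag D f (k : ℕ)
    rw [Finset.prod_congr rfl (fun k _ => this k), Finset.prod_pow_eq_pow_sum,
      Fin.sum_univ_eq_sum_range (fun k => k) n, Finset.sum_range_id]
    have hnn : n * (n - 1) = d * (d + 1) := by
      simp only [hn, Nat.add_sub_cancel]; ring
    rw [hnn]
  have hdetM : M.det = (∏ k ∈ Finset.range n, (Nat.factorial k : A)) * f ^ n *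
      (D f) ^ (d * (d + 1) / 2) := by
    rw [hMV, hV'VT, Matrix.det_mul, Matrix.det_mul, hdetV, hdetT, hdetB]
  -- conclude
  have hifin : i < n := by omega
  have hz := congrFun hdc (⟨i, hifin⟩ : Fin n)
  simp only [Pi.smul_apply, smul_eq_mul, Pi.zero_apply, hcv] at hz
  rw [hdetM] at hz
  calc (∏ k ∈ Finset.range (d + 1), (Nat.factorial k : A)) *
        c i * (D f) ^ (d * (d + 1) / 2) * f ^ (d + 1)
      = (∏ k ∈ Finset.range n, (Nat.factorial k : A)) * f ^ n *
          (D f) ^ (d * (d + 1) / 2) * c ((⟨i, hifin⟩ : Fin n) : ℕ) := by ring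
    _ = 0 := hz
end
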